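/- arXiv:2106.00363 — 3 statements merged into one kernel-verified Lean document; each statement's English description precedes it below -/
import Mathlib

section
/- Let R be a graded polynomial ring over ℚ generated in degree 2 (the cohomology of a classifying space of a torus). Let f : M → N be a map of finitely generated graded R-modules such that for every proper graded prime ideal 𝔭 not containing all of R², the localization f_𝔭 is an isomorphism. Then the kernel and cokernel of f are finite dimensional over ℚ. -/
open MvPolynomial DirectSum Finset

set_option maxHeartbeats 1000000
set_option linter.unusedSectionVars false
set_option synthInstance.maxHeartbeats 200000

attribute [local instance] MvPolynomial.gradedAlgebra

namespace Stmt0Helpers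

section Graded

variable {P : Type} [AddCommGroup P] [Module ℚ P] {PG : ℕ → Submodule ℚ P}

lemma indep (hint : DirectSum.IsInternal PG) {ι : Type} (t : Finset ι) (d : ι → ℕ)
    (hd : Set.InjOn d t) (y : ι → P) (hy : ∀ j ∈ t, y j ∈ PG (d j))
    (h0 : ∑ j ∈ t, y j = 0) : ∀ j ∈ t, y j = 0 := by
  classical
  intro j hj
  set z : ⨁ i, PG i :=
    ∑ j ∈ t.attach, DirectSum.of (fun i => PG i) (d j.1) ⟨y j.1, hy j.1 j.2⟩ with hzdef
  have hz : DirectSum.coeAddMonoidHom PG z = 0 := by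
    rw [hzdef, map_sum]
    simp only [DirectSum.coeAddMonoidHom_of]
    rw [Finset.sum_attach t fun j => y j]
    exact h0
  have hz0 : z = 0 := hint.injective (by rw [hz, map_zero])
  have hev : ∑ b ∈ t.attach,
      (DirectSum.of (fun i => PG i) (d b.1) ⟨y b.1, hy b.1 b.2⟩) (d j) = 0 := by
    rw [← DFinsupp.finset_sum_apply, ← hzdef, hz0]
    rfl
  rw [Finset.sum_eq_single (⟨j, hj⟩ : {x // x ∈ t})] at hev
  · rw [DirectSum.of_eq_same] at hev
    exact Subtype.ext_iff.mp hev
  · intro b _ hb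
    exact DirectSum.of_eq_of_ne (β := fun i => (PG i : Type)) (d b.1) (d j) _
      (fun hdb => hb (Subtype.ext (hd b.2 hj hdb.symm)))
  · intro h; exact absurd (Finset.mem_attach _ _) h

lemma decompose_exists (hint : DirectSum.IsInternal PG) (p : P) :
    ∃ (t : Finset ℕ) (c : ℕ → P), (∀ i, c i ∈ PG i) ∧ (∀ i ∉ t, c i = 0) ∧
      p = ∑ i ∈ t, c i := by
  classical
  obtain ⟨z, rfl⟩ := hint.surjective p
  refine ⟨z.support, fun i => (z i : P), fun i => (z i).2, ?_, ?_⟩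
  · intro i hi
    show ((z i : P) = 0)
    rw [DFinsupp.notMem_support_iff.mp hi]; rfl
  · conv_lhs => rw [← DirectSum.sum_support_of z]
    rw [map_sum]
    simp only [DirectSum.coeAddMonoidHom_of]

lemma decompose_unique (hint : DirectSum.IsInternal PG) {t t' : Finset ℕ} {c d : ℕ → P}
    (hc : ∀ i, c i ∈ PG i) (hd : ∀ i, d i ∈ PG i)
    (hc0 : ∀ i ∉ t, c i = 0) (hd0 : ∀ i ∉ t', d i = 0)
    (h : ∑ i ∈ t, c i = ∑ i ∈ t', d i) : ∀ i, c i = d i := by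
  classical
  have key : ∀ i ∈ t ∪ t', c i - d i = 0 := by
    refine indep hint (t ∪ t') id (Set.injOn_id _) (fun i => c i - d i)
      (fun i _ => sub_mem (hc i) (hd i)) ?_
    rw [Finset.sum_sub_distrib]
    rw [← Finset.sum_subset (Finset.subset_union_left (s₂ := t')) (fun x _ hx => hc0 x hx),
      ← Finset.sum_subset (Finset.subset_union_right (s₁ := t)) (fun x _ hx => hd0 x hx), h,
      sub_self]
  intro i
  by_cases hi : i ∈ t ∪ t'
  · exact sub_eq_zero.mp (key i hi)
  · rw [Finset.mem_union, not_or] at hi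
    rw [hc0 i hi.1, hd0 i hi.2]

end Graded

section Modules

variable {nv : ℕ}


lemma decompose_apply_coe (r : MvPolynomial (Fin nv) ℚ) (k : ℕ) :
    (DirectSum.decompose (MvPolynomial.homogeneousSubmodule (Fin nv) ℚ) r k : MvPolynomial (Fin nv) ℚ) = homogeneousComponent k r :=
  MvPolynomial.decomposition.decompose'_apply r k

variable {P : Type} [AddCommGroup P] [Module (MvPolynomial (Fin nv) ℚ) P] [Module ℚ P] [IsScalarTower ℚ (MvPolynomial (Fin nv) ℚ) P]
variable {PG : ℕ → Submodule ℚ P}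

lemma hom_ann_sub (hint : DirectSum.IsInternal PG)
    (hsmul : ∀ (i j : ℕ) (r : MvPolynomial (Fin nv) ℚ), r ∈ MvPolynomial.homogeneousSubmodule (Fin nv) ℚ i → ∀ m ∈ PG j, r • m ∈ PG (i + j))
    (Q : Submodule (MvPolynomial (Fin nv) ℚ) P)
    (hQ : ∀ q ∈ Q, ∀ (t : Finset ℕ) (c : ℕ → P), (∀ i, c i ∈ PG i) →
      (∀ i ∉ t, c i = 0) → q = ∑ i ∈ t, c i → ∀ i, c i ∈ Q)
    {r : MvPolynomial (Fin nv) ℚ} (hr : ∀ x ∈ Q, r • x = 0) (k : ℕ) :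
    ∀ x ∈ Q, (homogeneousComponent k r) • x = 0 := by
  intro x hx
  obtain ⟨t, c, hcPG, hc0, hsum⟩ := decompose_exists hint x
  have hcQ : ∀ i, c i ∈ Q := hQ x hx t c hcPG hc0 hsum
  rw [hsum, Finset.smul_sum]
  refine Finset.sum_eq_zero fun i _ => ?_
  by_cases hk : k ∈ Finset.range (r.totalDegree + 1)
  · refine indep hint (Finset.range (r.totalDegree + 1)) (fun j => j + i)
      (fun a _ b _ hab => Nat.add_right_cancel hab) (fun j => (homogeneousComponent j r) • c i)
      (fun j _ => hsmul j i _ (homogeneousComponent_mem j r) _ (hcPG i)) ?_ k hk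
    rw [← Finset.sum_smul, sum_homogeneousComponent]
    exact hr _ (hcQ i)
  · rw [homogeneousComponent_eq_zero k r
      (by simp only [Finset.mem_range] at hk; omega), zero_smul]

lemma hom_ann_quot (hint : DirectSum.IsInternal PG)
    (hsmul : ∀ (i j : ℕ) (r : MvPolynomial (Fin nv) ℚ), r ∈ MvPolynomial.homogeneousSubmodule (Fin nv) ℚ i → ∀ m ∈ PG j, r • m ∈ PG (i + j))
    (Q : Submodule (MvPolynomial (Fin nv) ℚ) P)
    (hQ : ∀ q ∈ Q, ∀ (t : Finset ℕ) (c : ℕ → P), (∀ i, c i ∈ PG i) →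
      (∀ i ∉ t, c i = 0) → q = ∑ i ∈ t, c i → ∀ i, c i ∈ Q)
    {r : MvPolynomial (Fin nv) ℚ} (hr : ∀ p : P, r • p ∈ Q) (k : ℕ) :
    ∀ p : P, (homogeneousComponent k r) • p ∈ Q := by
  intro p
  obtain ⟨t, c, hcPG, hc0, hsum⟩ := decompose_exists hint p
  rw [hsum, Finset.smul_sum]
  refine Submodule.sum_mem _ fun i _ => ?_
  set d : ℕ → P := fun l => if i ≤ l then (homogeneousComponent (l - i) r) • c i else 0
    with hddef
  have hdPG : ∀ l, d l ∈ PG l := by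
    intro l
    rw [hddef]; dsimp only
    split_ifs with h
    · have := hsmul (l - i) i _ (homogeneousComponent_mem (l - i) r) _ (hcPG i)
      rwa [Nat.sub_add_cancel h] at this
    · exact zero_mem _
  have hd0 : ∀ l ∉ (Finset.range (r.totalDegree + 1)).image (· + i), d l = 0 := by
    intro l hl
    rw [hddef]; dsimp only
    split_ifs with h
    · have hnl : ¬ (l - i) < r.totalDegree + 1 := by
        intro hlt
        exact hl (Finset.mem_image.mpr ⟨l - i, Finset.mem_range.mpr hlt, by omega⟩)
      rw [homogeneousComponent_eq_zero (l - i) r (by omega), zero_smul]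
    · rfl
  have hsum2 : r • c i = ∑ l ∈ (Finset.range (r.totalDegree + 1)).image (· + i), d l := by
    rw [Finset.sum_image (fun a _ b _ h => by omega)]
    rw [Finset.sum_congr rfl (fun j _ => show d (j + i) = (homogeneousComponent j r) • c i by
      rw [hddef]; dsimp only; rw [if_pos (by omega), Nat.add_sub_cancel])]
    rw [← Finset.sum_smul, sum_homogeneousComponent]
  have hall := hQ _ (hr (c i)) _ d hdPG hd0 hsum2
  have hk := hall (k + i)
  rw [hddef] at hk; dsimp only at hk
  rw [if_pos (by omega), Nat.add_sub_cancel] at hk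
  exact hk

end Modules

section Loc

variable {nv : ℕ}


variable {M N : Type} [AddCommGroup M] [Module (MvPolynomial (Fin nv) ℚ) M] [AddCommGroup N] [Module (MvPolynomial (Fin nv) ℚ) N]

lemma sub_ker (S : Submonoid (MvPolynomial (Fin nv) ℚ)) (f : M →ₗ[MvPolynomial (Fin nv) ℚ] N)
    (h : Function.Injective (LocalizedModule.map S f)) :
    Subsingleton (LocalizedModule S (LinearMap.ker f)) := by
  rw [LocalizedModule.subsingleton_iff]
  rintro ⟨x, hx⟩
  have h1 : LocalizedModule.map S f (LocalizedModule.mk x 1) =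
      LocalizedModule.map S f (LocalizedModule.mk 0 1) := by
    rw [LocalizedModule.map_mk, LocalizedModule.map_mk, LinearMap.mem_ker.mp hx, map_zero]
  have h2 := h h1
  rw [LocalizedModule.mk_eq] at h2
  obtain ⟨u, hu⟩ := h2
  simp only [one_smul, smul_zero] at hu
  exact ⟨u, u.2, Subtype.ext (by simpa [Submonoid.smul_def] using hu)⟩

lemma sub_coker (S : Submonoid (MvPolynomial (Fin nv) ℚ)) (f : M →ₗ[MvPolynomial (Fin nv) ℚ] N)
    (h : Function.Surjective (LocalizedModule.map S f)) :
    Subsingleton (LocalizedModule S (N ⧸ LinearMap.range f)) := by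
  rw [LocalizedModule.subsingleton_iff]
  intro c
  obtain ⟨n, rfl⟩ := Submodule.Quotient.mk_surjective _ c
  obtain ⟨x, hx⟩ := h (LocalizedModule.mk n 1)
  revert hx
  refine LocalizedModule.induction_on ?_ x
  intro m s hx
  rw [LocalizedModule.map_mk, LocalizedModule.mk_eq] at hx
  obtain ⟨u, hu⟩ := hx
  simp only [one_smul, Submonoid.smul_def, smul_smul] at hu
  refine ⟨(u : MvPolynomial (Fin nv) ℚ) * (s : MvPolynomial (Fin nv) ℚ), S.mul_mem u.2 s.2, ?_⟩
  rw [← Submodule.Quotient.mk_smul, Submodule.Quotient.mk_eq_zero]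
  rw [← hu, ← map_smul]
  exact LinearMap.mem_range_self f _

end Loc


section Key

variable {nv : ℕ}

lemma pow_ann (P : Type) [AddCommGroup P] [Module (MvPolynomial (Fin nv) ℚ) P]
    [Module.Finite (MvPolynomial (Fin nv) ℚ) P]
    (hann : Ideal.IsHomogeneous (MvPolynomial.homogeneousSubmodule (Fin nv) ℚ)
      (Module.annihilator (MvPolynomial (Fin nv) ℚ) P))
    (hsub : ∀ (𝔮 : Ideal (MvPolynomial (Fin nv) ℚ)) [𝔮.IsPrime],
      (∀ p ∈ 𝔮, ∀ i, homogeneousComponent i p ∈ 𝔮) →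
      (∃ p : MvPolynomial (Fin nv) ℚ, p.IsHomogeneous 1 ∧ p ∉ 𝔮) →
      Subsingleton (LocalizedModule 𝔮.primeCompl P))
    (i : Fin nv) :
    ∃ k, (X i ^ k : MvPolynomial (Fin nv) ℚ) ∈ Module.annihilator (MvPolynomial (Fin nv) ℚ) P := by
  have hrad : (X i : MvPolynomial (Fin nv) ℚ) ∈
      (Module.annihilator (MvPolynomial (Fin nv) ℚ) P).radical := by
    rw [Ideal.radical_eq_sInf]
    refine Submodule.mem_sInf.mpr ?_
    rintro 𝔭 ⟨hle, hp⟩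
    haveI := hp
    haveI h𝔮p : (Ideal.homogeneousCore (MvPolynomial.homogeneousSubmodule (Fin nv) ℚ) 𝔭).toIdeal.IsPrime :=
      hp.homogeneousCore
    have h1 : (⟨Module.annihilator (MvPolynomial (Fin nv) ℚ) P, hann⟩ :
        HomogeneousIdeal (MvPolynomial.homogeneousSubmodule (Fin nv) ℚ)) ≤
        Ideal.homogeneousCore (MvPolynomial.homogeneousSubmodule (Fin nv) ℚ) 𝔭 :=
      (Ideal.homogeneousCore.gc (MvPolynomial.homogeneousSubmodule (Fin nv) ℚ)).le_u hle
    have hle𝔮 : Module.annihilator (MvPolynomial (Fin nv) ℚ) P ≤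
        (Ideal.homogeneousCore (MvPolynomial.homogeneousSubmodule (Fin nv) ℚ) 𝔭).toIdeal :=
      fun x hx => h1 hx
    by_cases hex : ∃ p : MvPolynomial (Fin nv) ℚ, p.IsHomogeneous 1 ∧
        p ∉ (Ideal.homogeneousCore (MvPolynomial.homogeneousSubmodule (Fin nv) ℚ) 𝔭).toIdeal
    · haveI hsb := hsub (Ideal.homogeneousCore (MvPolynomial.homogeneousSubmodule (Fin nv) ℚ) 𝔭).toIdeal
        (fun p hp' j => by
          have := HomogeneousIdeal.isHomogeneous (Ideal.homogeneousCore (MvPolynomial.homogeneousSubmodule (Fin nv) ℚ) 𝔭) j hp'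
          rwa [decompose_apply_coe] at this) hex
      have hnt : (⟨_, h𝔮p⟩ : PrimeSpectrum (MvPolynomial (Fin nv) ℚ)) ∈
          Module.support (MvPolynomial (Fin nv) ℚ) P :=
        Module.mem_support_iff_of_finite.mpr hle𝔮
      rw [Module.mem_support_iff] at hnt
      exact absurd hnt (not_nontrivial_iff_subsingleton.mpr hsb)
    · push_neg at hex
      exact Ideal.toIdeal_homogeneousCore_le _ 𝔭 (hex (X i) (isHomogeneous_X ℚ i))
  exact Ideal.mem_radical_iff.mp hrad

end Key

section FinQ

variable {nv : ℕ}

lemma finiteQ (P : Type) [AddCommGroup P] [Module (MvPolynomial (Fin nv) ℚ) P]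
    [Module ℚ P] [IsScalarTower ℚ (MvPolynomial (Fin nv) ℚ) P]
    [Module.Finite (MvPolynomial (Fin nv) ℚ) P]
    (k : Fin nv → ℕ)
    (hk : ∀ (i : Fin nv) (x : P), ((X i : MvPolynomial (Fin nv) ℚ) ^ k i) • x = 0) :
    Module.Finite ℚ P := by
  classical
  obtain ⟨s, hs⟩ := Module.Finite.fg_top (R := MvPolynomial (Fin nv) ℚ) (M := P)
  set D : Set (Fin nv → ℕ) := {d | ∀ i, d i ≤ k i} with hD
  have hDfin : D.Finite := by
    refine Set.Finite.subset (Set.Finite.pi (fun i => Set.finite_Iic (k i))) ?_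
    intro d hd
    exact Set.mem_pi.mpr fun i _ => hd i
  set G : Set P := (fun q : (Fin nv → ℕ) × P =>
    (∏ i, (X i : MvPolynomial (Fin nv) ℚ) ^ q.1 i) • q.2) '' (D ×ˢ (s : Set P)) with hG
  have hGfin : G.Finite := (hDfin.prod s.finite_toSet).image _
  have CL0 : ∀ (e : Fin nv → ℕ) (m : P), m ∈ s →
      (∏ i, (X i : MvPolynomial (Fin nv) ℚ) ^ e i) • m ∈ Submodule.span ℚ G := by
    intro e m hm
    by_cases he : ∀ i, e i ≤ k i
    · exact Submodule.subset_span ⟨(e, m), ⟨he, hm⟩, rfl⟩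
    · push_neg at he
      obtain ⟨i0, hi0⟩ := he
      have hfac : (∏ i, (X i : MvPolynomial (Fin nv) ℚ) ^ e i) =
          ((∏ i ∈ Finset.univ.erase i0, (X i : MvPolynomial (Fin nv) ℚ) ^ e i) *
            (X i0 : MvPolynomial (Fin nv) ℚ) ^ (e i0 - k i0)) *
            (X i0 : MvPolynomial (Fin nv) ℚ) ^ (k i0) := by
        rw [← Finset.prod_erase_mul Finset.univ _ (Finset.mem_univ i0)]
        rw [mul_assoc, ← pow_add]
        congr 2
        omega
      rw [hfac, mul_smul, hk i0 m, smul_zero]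
      exact Submodule.zero_mem _
  have CL2 : ∀ (p : MvPolynomial (Fin nv) ℚ) (m : P), m ∈ s →
      p • m ∈ Submodule.span ℚ G := by
    intro p m hm
    have hrw : p • m = ∑ v ∈ p.support, (MvPolynomial.monomial v (MvPolynomial.coeff v p)) • m := by
      rw [← Finset.sum_smul, ← MvPolynomial.as_sum]
    rw [hrw]
    refine Submodule.sum_mem _ fun v _ => ?_
    have hmon : (MvPolynomial.monomial v) (MvPolynomial.coeff v p) • m =
        (MvPolynomial.coeff v p) • ((∏ i, (X i : MvPolynomial (Fin nv) ℚ) ^ v i) • m) := by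
      rw [MvPolynomial.monomial_eq, ← MvPolynomial.smul_eq_C_mul,
        Finsupp.prod_fintype _ _ (fun i => pow_zero _), smul_assoc]
    rw [hmon]
    exact Submodule.smul_mem _ _ (CL0 _ m hm)
  have hT : ∀ x ∈ Submodule.span ℚ G, ∀ r : MvPolynomial (Fin nv) ℚ,
      r • x ∈ Submodule.span ℚ G := by
    intro x hx
    induction hx using Submodule.span_induction with
    | mem x hxG =>
      intro r
      obtain ⟨⟨e, m⟩, ⟨he, hm⟩, rfl⟩ := hxG
      rw [← mul_smul]
      exact CL2 _ m hm
    | zero => intro r; rw [smul_zero]; exact zero_mem _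
    | add x y hx hy ihx ihy => intro r; rw [smul_add]; exact add_mem (ihx r) (ihy r)
    | smul a x hx ih =>
      intro r
      rw [smul_comm]
      exact Submodule.smul_mem _ _ (ih r)
  have htop : Submodule.span ℚ G = ⊤ := by
    refine le_antisymm le_top ?_
    intro x hxtop
    clear hxtop
    have hx : x ∈ Submodule.span (MvPolynomial (Fin nv) ℚ) (s : Set P) := by
      rw [hs]; trivial
    induction hx using Submodule.span_induction with
    | mem x hxs => simpa using CL2 1 x hxs
    | zero => exact zero_mem _
    | add x y _ _ ihx ihy => exact add_mem ihx ihy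
    | smul r x hx ih => exact hT x ih r
  exact ⟨Submodule.fg_def.mpr ⟨G, hGfin, htop⟩⟩

end FinQ

end Stmt0Helpers


open Stmt0Helpers

/-- Let `R = ℚ[x₁,…,xₙ]` be a graded polynomial ring over `ℚ` generated in
degree 2 (since all variables have the same degree, the grading is encoded by the standard
homogeneous grading of the polynomial ring).  Let `f : M → N` be a map of finitely
generated graded `R`-modules such that for every graded (homogeneous) prime ideal `𝔭` not
containing all of the degree-2 part `R²` (= the homogeneous elements of polynomial
degree 1), the localization `f_𝔭` is an isomorphism.  Then the kernel and cokernel of `f`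
are finite dimensional over `ℚ`.  (Primality in Mathlib already includes properness.) -/
theorem stmt_0 {nv : ℕ} (M N : Type)
    [AddCommGroup M] [Module (MvPolynomial (Fin nv) ℚ) M] [Module ℚ M]
    [IsScalarTower ℚ (MvPolynomial (Fin nv) ℚ) M]
    [AddCommGroup N] [Module (MvPolynomial (Fin nv) ℚ) N] [Module ℚ N]
    [IsScalarTower ℚ (MvPolynomial (Fin nv) ℚ) N]
    [Module.Finite (MvPolynomial (Fin nv) ℚ) M]
    [Module.Finite (MvPolynomial (Fin nv) ℚ) N]
    (MG : ℕ → Submodule ℚ M) (NG : ℕ → Submodule ℚ N)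
    (hintM : DirectSum.IsInternal MG) (hintN : DirectSum.IsInternal NG)
    (hsmulM : ∀ (i j : ℕ) (r : MvPolynomial (Fin nv) ℚ),
      r ∈ MvPolynomial.homogeneousSubmodule (Fin nv) ℚ i →
      ∀ m ∈ MG j, r • m ∈ MG (i + j))
    (hsmulN : ∀ (i j : ℕ) (r : MvPolynomial (Fin nv) ℚ),
      r ∈ MvPolynomial.homogeneousSubmodule (Fin nv) ℚ i →
      ∀ m ∈ NG j, r • m ∈ NG (i + j))
    (f : M →ₗ[MvPolynomial (Fin nv) ℚ] N)
    (hfgraded : ∀ (i : ℕ), ∀ m ∈ MG i, f m ∈ NG i)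
    (hloc : ∀ (𝔭 : Ideal (MvPolynomial (Fin nv) ℚ)) [𝔭.IsPrime],
      (∀ p ∈ 𝔭, ∀ i, MvPolynomial.homogeneousComponent i p ∈ 𝔭) →
      (∃ p : MvPolynomial (Fin nv) ℚ, p.IsHomogeneous 1 ∧ p ∉ 𝔭) →
      Function.Bijective (LocalizedModule.map 𝔭.primeCompl f)) :
    FiniteDimensional ℚ (LinearMap.ker (LinearMap.restrictScalars ℚ f)) ∧
    FiniteDimensional ℚ (N ⧸ LinearMap.range (LinearMap.restrictScalars ℚ f)) := by
  classical
  haveI hKfin : Module.Finite (MvPolynomial (Fin nv) ℚ) ↥(LinearMap.ker f) :=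
    Module.Finite.iff_fg.mpr (IsNoetherian.noetherian _)
  -- component-closedness of the kernel
  have hQker : ∀ q ∈ LinearMap.ker f, ∀ (t : Finset ℕ) (c : ℕ → M), (∀ i, c i ∈ MG i) →
      (∀ i ∉ t, c i = 0) → q = ∑ i ∈ t, c i → ∀ i, c i ∈ LinearMap.ker f := by
    intro q hq t c hcMG hc0 hsum i
    have h0 : ∑ j ∈ t, f (c j) = 0 := by
      rw [← map_sum, ← hsum]
      exact hq
    by_cases hit : i ∈ t
    · exact LinearMap.mem_ker.mpr (indep hintN t id (Set.injOn_id _) (fun j => f (c j))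
        (fun j _ => hfgraded j _ (hcMG j)) h0 i hit)
    · rw [hc0 i hit]
      exact zero_mem _
  -- component-closedness of the range
  have hQran : ∀ q ∈ LinearMap.range f, ∀ (t : Finset ℕ) (c : ℕ → N), (∀ i, c i ∈ NG i) →
      (∀ i ∉ t, c i = 0) → q = ∑ i ∈ t, c i → ∀ i, c i ∈ LinearMap.range f := by
    intro q hq t c hcNG hc0 hsum i
    obtain ⟨m, rfl⟩ := hq
    obtain ⟨t', e, heMG, he0, hesum⟩ := decompose_exists hintM m
    have hcfe : ∀ j, c j = f (e j) :=
      decompose_unique hintN hcNG (fun j => hfgraded j _ (heMG j)) hc0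
        (fun j hj => by rw [he0 j hj, map_zero])
        (by rw [← hsum, hesum, map_sum])
    rw [hcfe i]
    exact LinearMap.mem_range_self f _
  -- homogeneity of the annihilator of the kernel
  have hannK : Ideal.IsHomogeneous (MvPolynomial.homogeneousSubmodule (Fin nv) ℚ)
      (Module.annihilator (MvPolynomial (Fin nv) ℚ) ↥(LinearMap.ker f)) := by
    intro j r hr
    rw [Module.mem_annihilator] at hr ⊢
    have hr' : ∀ y ∈ LinearMap.ker f, r • y = 0 := by
      intro y hy
      simpa using congrArg Subtype.val (hr ⟨y, hy⟩)
    intro x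
    refine Subtype.ext ?_
    have hx := hom_ann_sub hintM hsmulM (LinearMap.ker f) hQker hr' j x.1 x.2
    rw [decompose_apply_coe]
    simpa using hx
  -- homogeneity of the annihilator of the cokernel
  have hannC : Ideal.IsHomogeneous (MvPolynomial.homogeneousSubmodule (Fin nv) ℚ)
      (Module.annihilator (MvPolynomial (Fin nv) ℚ) (N ⧸ LinearMap.range f)) := by
    intro j r hr
    rw [Module.mem_annihilator] at hr ⊢
    have hr' : ∀ n : N, r • n ∈ LinearMap.range f := by
      intro n
      have := hr (Submodule.Quotient.mk n)
      rwa [← Submodule.Quotient.mk_smul, Submodule.Quotient.mk_eq_zero] at this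
    intro c
    obtain ⟨n, rfl⟩ := Submodule.Quotient.mk_surjective _ c
    rw [decompose_apply_coe, ← Submodule.Quotient.mk_smul, Submodule.Quotient.mk_eq_zero]
    exact hom_ann_quot hintN hsmulN (LinearMap.range f) hQran hr' j n
  -- powers of the variables annihilate kernel and cokernel
  have hpowK : ∀ i : Fin nv, ∃ k, (X i ^ k : MvPolynomial (Fin nv) ℚ) ∈
      Module.annihilator (MvPolynomial (Fin nv) ℚ) ↥(LinearMap.ker f) := by
    refine pow_ann _ hannK ?_
    intro 𝔮 hq hhom hex
    haveI := hq
    exact sub_ker 𝔮.primeCompl f (hloc 𝔮 hhom hex).1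
  have hpowC : ∀ i : Fin nv, ∃ k, (X i ^ k : MvPolynomial (Fin nv) ℚ) ∈
      Module.annihilator (MvPolynomial (Fin nv) ℚ) (N ⧸ LinearMap.range f) := by
    refine pow_ann _ hannC ?_
    intro 𝔮 hq hhom hex
    haveI := hq
    exact sub_coker 𝔮.primeCompl f (hloc 𝔮 hhom hex).2
  choose kK hkK using hpowK
  choose kC hkC using hpowC
  haveI hMK : Module.Finite ℚ ↥(LinearMap.ker f) :=
    finiteQ _ kK (fun i x => Module.mem_annihilator.mp (hkK i) x)
  haveI hMC : Module.Finite ℚ (N ⧸ LinearMap.range f) :=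
    finiteQ _ kC (fun i x => Module.mem_annihilator.mp (hkC i) x)
  constructor
  · rw [LinearMap.ker_restrictScalars]
    exact Module.Finite.equiv
      (LinearEquiv.restrictScalars ℚ
        (Submodule.restrictScalarsEquiv ℚ (MvPolynomial (Fin nv) ℚ) M (LinearMap.ker f))).symm
  · have hre : LinearMap.range (LinearMap.restrictScalars ℚ f) =
        (LinearMap.range f).restrictScalars ℚ := by
      ext x
      exact Iff.rfl
    rw [hre]
    exact Module.Finite.equiv
      (Submodule.Quotient.restrictScalarsEquiv ℚ (LinearMap.range f)).symm
end

section
/- Let D be a partially ordered set in which every strictly ascending chain has length at most n for some n, viewed as a category. Let A → B be a natural transformation of functors from D to cochain complexes over ℚ such that: (a) for every d ∈ D the maps A(d) → lim_{d' > d} A and B(d) → lim_{d' > d} B are surjective, and (b) A(d) → B(d) is a quasi-isomorphism for every d. Then the induced map lim_D A → lim_D B is a quasi-isomorphism. -/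
theorem wf_of_bounded_chains {D : Type} [PartialOrder D]
    (hbound : ∃ N : ℕ, ∀ l : List D, l.Chain' (· < ·) → l.length ≤ N) :
    WellFounded (fun a b : D => b < a) := by
  obtain ⟨N, hN⟩ := hbound
  constructor
  have key : ∀ k : ℕ, ∀ d : D,
      (∀ l : List D, (d :: l).Chain' (· < ·) → l.length ≤ k) → Acc (fun a b : D => b < a) d := by
    intro k
    induction k with
    | zero =>
      intro d hd
      constructor
      intro e he
      have := hd [e] (List.isChain_cons_cons.mpr ⟨he, List.isChain_singleton e⟩)
      simp at this
    | succ k ih =>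
      intro d hd
      constructor
      intro e he
      apply ih
      intro l hl
      have := hd (e :: l) (List.isChain_cons_cons.mpr ⟨he, hl⟩)
      simpa using this
  intro d
  apply key N
  intro l hl
  have := hN (d :: l) hl
  simp at this
  omega

theorem wf_dep_choice {α : Type} {r : α → α → Prop} (hwf : WellFounded r)
    (htrans : ∀ ⦃a b c : α⦄, r c b → r b a → r c a)
    {C : α → Type} (hne : ∀ a, Nonempty (C a))
    (R : ∀ a, C a → (∀ b, r b a → C b) → Prop)
    (hstep : ∀ a (g : ∀ b, r b a → C b),
      (∀ b (hb : r b a), R b (g b hb) (fun c hc => g c (htrans hc hb))) → ∃ z, R a z g) :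
    ∃ f : ∀ a, C a, ∀ a, R a (f a) (fun b _ => f b) := by
  classical
  have hstep' : ∀ a (g : ∀ b, r b a → C b), ∃ z : C a,
      (∀ b (hb : r b a), R b (g b hb) (fun c hc => g c (htrans hc hb))) → R a z g := by
    intro a g
    by_cases h : ∀ b (hb : r b a), R b (g b hb) (fun c hc => g c (htrans hc hb))
    · obtain ⟨z, hz⟩ := hstep a g h
      exact ⟨z, fun _ => hz⟩
    · exact ⟨(hne a).some, fun h' => absurd h' h⟩
  set F : ∀ a, (∀ b, r b a → C b) → C a := fun a g => Classical.choose (hstep' a g) with hF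
  refine ⟨hwf.fix F, fun a => ?_⟩
  refine hwf.induction (C := fun a => R a (hwf.fix F a) (fun b _ => hwf.fix F b)) a ?_
  intro x IH
  have hfix : hwf.fix F x = F x (fun b _ => hwf.fix F b) := WellFounded.fix_eq hwf F x
  rw [hfix]
  exact Classical.choose_spec (hstep' x (fun b _ => hwf.fix F b)) (fun b hb => IH b hb)

/-- The "kernel quasi-isomorphism" conditions at a point `d`:
the kernel complexes `K_A d = ker (A d → lim_{e>d} A)`, `K_B d` are quasi-isomorphic via η,
in the precise elementwise forms needed. -/
def KLem {D : Type} [PartialOrder D] (A B : D → ℕ → Type)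
    [∀ d n, AddCommGroup (A d n)] [∀ d n, Module ℚ (A d n)]
    [∀ d n, AddCommGroup (B d n)] [∀ d n, Module ℚ (B d n)]
    (FA : ∀ ⦃d d' : D⦄, d ≤ d' → ∀ n, A d n →ₗ[ℚ] A d' n)
    (FB : ∀ ⦃d d' : D⦄, d ≤ d' → ∀ n, B d n →ₗ[ℚ] B d' n)
    (dA : ∀ d n, A d n →ₗ[ℚ] A d (n + 1)) (dB : ∀ d n, B d n →ₗ[ℚ] B d (n + 1))
    (η : ∀ d n, A d n →ₗ[ℚ] B d n) (d : D) : Prop :=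
  (∀ w : B d 0, (∀ e (h : d < e), FB h.le 0 w = 0) → dB d 0 w = 0 →
      ∃ a : A d 0, (∀ e (h : d < e), FA h.le 0 a = 0) ∧ dA d 0 a = 0 ∧ η d 0 a = w) ∧
  (∀ m (c : A d (m + 1)) (w : B d m), (∀ e (h : d < e), FA h.le (m + 1) c = 0) →
      dA d (m + 1) c = 0 → (∀ e (h : d < e), FB h.le m w = 0) → η d (m + 1) c = dB d m w →
      ∃ k : A d m, (∀ e (h : d < e), FA h.le m k = 0) ∧ dA d m k = c) ∧
  (∀ m (w : B d (m + 1)), (∀ e (h : d < e), FB h.le (m + 1) w = 0) → dB d (m + 1) w = 0 →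
      ∃ a : A d (m + 1), (∀ e (h : d < e), FA h.le (m + 1) a = 0) ∧ dA d (m + 1) a = 0 ∧
        ∃ b : B d m, (∀ e (h : d < e), FB h.le m b = 0) ∧ η d (m + 1) a - w = dB d m b)

/-! STATEMENT 8: Let `D` be a partially ordered set in which every strictly ascending
chain has length at most `n` for some `n`, viewed as a category.  Let `A → B` be a natural
transformation of functors from `D` to cochain complexes over `ℚ` such that (a) for every
`d ∈ D` the maps `A(d) → lim_{d' > d} A` and `B(d) → lim_{d' > d} B` are surjective
(condition (SC)), and (b) `A(d) → B(d)` is a quasi-isomorphism for every `d`.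
Then the induced map `lim_D A → lim_D B` is a quasi-isomorphism.

Everything is encoded concretely: functors to cochain complexes are families of
`ℚ`-modules `A d n` with transition maps and differentials; a point of `lim_E A` in
degree `n` is a compatible family `(x_d)_{d∈E}`; quasi-isomorphisms are expressed
elementwise (bijectivity on `Hⁿ` for all `n ≥ 0`, with `H⁰ = ker d⁰`). -/

set_option maxHeartbeats 3000000 in
theorem stmt_8 (D : Type) [PartialOrder D]
    (hbound : ∃ N : ℕ, ∀ l : List D, l.Chain' (· < ·) → l.length ≤ N)
    (A B : D → ℕ → Type)
    [∀ d n, AddCommGroup (A d n)] [∀ d n, Module ℚ (A d n)]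
    [∀ d n, AddCommGroup (B d n)] [∀ d n, Module ℚ (B d n)]
    -- the transition maps of the two functors
    (FA : ∀ ⦃d d' : D⦄, d ≤ d' → ∀ n, A d n →ₗ[ℚ] A d' n)
    (FB : ∀ ⦃d d' : D⦄, d ≤ d' → ∀ n, B d n →ₗ[ℚ] B d' n)
    (hFAid : ∀ (d : D) n, FA (le_refl d) n = LinearMap.id)
    (hFBid : ∀ (d : D) n, FB (le_refl d) n = LinearMap.id)
    (hFAcomp : ∀ (d₁ d₂ d₃ : D) (h12 : d₁ ≤ d₂) (h23 : d₂ ≤ d₃) n,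
      FA (h12.trans h23) n = (FA h23 n).comp (FA h12 n))
    (hFBcomp : ∀ (d₁ d₂ d₃ : D) (h12 : d₁ ≤ d₂) (h23 : d₂ ≤ d₃) n,
      FB (h12.trans h23) n = (FB h23 n).comp (FB h12 n))
    -- the differentials
    (dA : ∀ d n, A d n →ₗ[ℚ] A d (n + 1)) (dB : ∀ d n, B d n →ₗ[ℚ] B d (n + 1))
    (hdA : ∀ d n x, dA d (n + 1) (dA d n x) = 0)
    (hdB : ∀ d n x, dB d (n + 1) (dB d n x) = 0)
    (hFAd : ∀ (d d' : D) (h : d ≤ d') n x, FA h (n + 1) (dA d n x) = dA d' n (FA h n x))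
    (hFBd : ∀ (d d' : D) (h : d ≤ d') n x, FB h (n + 1) (dB d n x) = dB d' n (FB h n x))
    -- the natural transformation `η : A → B`
    (η : ∀ d n, A d n →ₗ[ℚ] B d n)
    (hηnat : ∀ (d d' : D) (h : d ≤ d') n x, η d' n (FA h n x) = FB h n (η d n x))
    (hηd : ∀ d n x, η d (n + 1) (dA d n x) = dB d n (η d n x))
    -- (a) the surjectivity condition (SC) for `A` and `B`
    (hSCA : ∀ (d : D) (n : ℕ) (y : ∀ d' : D, A d' n),
      (∀ (d₁ d₂ : D), d < d₁ → d < d₂ → ∀ h12 : d₁ ≤ d₂, FA h12 n (y d₁) = y d₂) →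
      ∃ z : A d n, ∀ d' : D, ∀ h : d < d', FA h.le n z = y d')
    (hSCB : ∀ (d : D) (n : ℕ) (y : ∀ d' : D, B d' n),
      (∀ (d₁ d₂ : D), d < d₁ → d < d₂ → ∀ h12 : d₁ ≤ d₂, FB h12 n (y d₁) = y d₂) →
      ∃ z : B d n, ∀ d' : D, ∀ h : d < d', FB h.le n z = y d')
    -- (b) `η` is a pointwise quasi-isomorphism
    (hq0surj : ∀ (d : D) (b : B d 0), dB d 0 b = 0 →
      ∃ a : A d 0, dA d 0 a = 0 ∧ η d 0 a = b)
    (hq0inj : ∀ (d : D) (a : A d 0), dA d 0 a = 0 → η d 0 a = 0 → a = 0)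
    (hqsurj : ∀ (d : D) (n : ℕ) (b : B d (n + 1)), dB d (n + 1) b = 0 →
      ∃ a : A d (n + 1), dA d (n + 1) a = 0 ∧ ∃ b' : B d n, η d (n + 1) a - b = dB d n b')
    (hqinj : ∀ (d : D) (n : ℕ) (a : A d (n + 1)), dA d (n + 1) a = 0 →
      (∃ b' : B d n, η d (n + 1) a = dB d n b') → ∃ a' : A d n, dA d n a' = a) :
    -- conclusion: `lim_D A → lim_D B` is a quasi-isomorphism
    (∀ y : ∀ d, B d 0,
      (∀ (d₁ d₂ : D) (h : d₁ ≤ d₂), FB h 0 (y d₁) = y d₂) → (∀ d, dB d 0 (y d) = 0) →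
      ∃ x : ∀ d, A d 0, (∀ (d₁ d₂ : D) (h : d₁ ≤ d₂), FA h 0 (x d₁) = x d₂) ∧
        (∀ d, dA d 0 (x d) = 0) ∧ (∀ d, η d 0 (x d) = y d)) ∧
    (∀ x : ∀ d, A d 0,
      (∀ (d₁ d₂ : D) (h : d₁ ≤ d₂), FA h 0 (x d₁) = x d₂) → (∀ d, dA d 0 (x d) = 0) →
      (∀ d, η d 0 (x d) = 0) → ∀ d, x d = 0) ∧
    (∀ n : ℕ, ∀ y : ∀ d, B d (n + 1),
      (∀ (d₁ d₂ : D) (h : d₁ ≤ d₂), FB h (n + 1) (y d₁) = y d₂) →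
      (∀ d, dB d (n + 1) (y d) = 0) →
      ∃ x : ∀ d, A d (n + 1),
        (∀ (d₁ d₂ : D) (h : d₁ ≤ d₂), FA h (n + 1) (x d₁) = x d₂) ∧
        (∀ d, dA d (n + 1) (x d) = 0) ∧
        ∃ z : ∀ d, B d n, (∀ (d₁ d₂ : D) (h : d₁ ≤ d₂), FB h n (z d₁) = z d₂) ∧
          ∀ d, η d (n + 1) (x d) - y d = dB d n (z d)) ∧
    (∀ n : ℕ, ∀ x : ∀ d, A d (n + 1),
      (∀ (d₁ d₂ : D) (h : d₁ ≤ d₂), FA h (n + 1) (x d₁) = x d₂) →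
      (∀ d, dA d (n + 1) (x d) = 0) →
      (∃ z : ∀ d, B d n, (∀ (d₁ d₂ : D) (h : d₁ ≤ d₂), FB h n (z d₁) = z d₂) ∧
        ∀ d, η d (n + 1) (x d) = dB d n (z d)) →
      ∃ x' : ∀ d, A d n, (∀ (d₁ d₂ : D) (h : d₁ ≤ d₂), FA h n (x' d₁) = x' d₂) ∧
        ∀ d, dA d n (x' d) = x d) := by
  classical
  have FAid : ∀ (d : D) (n : ℕ) (x : A d n), FA (le_refl d) n x = x := by
    intro d n x; rw [hFAid]; rfl
  have FBid : ∀ (d : D) (n : ℕ) (x : B d n), FB (le_refl d) n x = x := by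
    intro d n x; rw [hFBid]; rfl
  have FAcomp : ∀ {d₁ d₂ d₃ : D} (h12 : d₁ ≤ d₂) (h23 : d₂ ≤ d₃) (n : ℕ) (x : A d₁ n),
      FA h23 n (FA h12 n x) = FA (h12.trans h23) n x := by
    intro d₁ d₂ d₃ h12 h23 n x; rw [hFAcomp d₁ d₂ d₃ h12 h23 n]; rfl
  have FBcomp : ∀ {d₁ d₂ d₃ : D} (h12 : d₁ ≤ d₂) (h23 : d₂ ≤ d₃) (n : ℕ) (x : B d₁ n),
      FB h23 n (FB h12 n x) = FB (h12.trans h23) n x := by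
    intro d₁ d₂ d₃ h12 h23 n x; rw [hFBcomp d₁ d₂ d₃ h12 h23 n]; rfl
  have hwf : WellFounded (fun a b : D => b < a) := wf_of_bounded_chains hbound
  have htr : ∀ ⦃a b c : D⦄, (fun a b : D => b < a) c b → (fun a b : D => b < a) b a →
      (fun a b : D => b < a) c a := fun a b c hc hb => lt_trans hb hc
  -- lifting a strictly-compatible family above `d` into `A d` / `B d`, using (SC)
  have liftA : ∀ (d : D) (m : ℕ) (X : ∀ e, d < e → A e m),
      (∀ d₁ d₂ (h1 : d < d₁) (hlt : d₁ < d₂), FA hlt.le m (X d₁ h1) = X d₂ (h1.trans hlt)) →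
      ∃ u : A d m, ∀ e (h : d < e), FA h.le m u = X e h := by
    intro d m X hX
    have hcomp : ∀ d₁ d₂ : D, d < d₁ → d < d₂ → ∀ h12 : d₁ ≤ d₂,
        FA h12 m (if h : d < d₁ then X d₁ h else 0) = (if h : d < d₂ then X d₂ h else 0) := by
      intro d₁ d₂ h1 h2 h12
      rw [dif_pos h1, dif_pos h2]
      rcases lt_or_eq_of_le h12 with hlt | heq
      · exact hX d₁ d₂ h1 hlt
      · subst heq; exact FAid _ _ _
    obtain ⟨u, hu⟩ := hSCA d m (fun e => if h : d < e then X e h else 0) hcomp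
    refine ⟨u, fun e h => ?_⟩
    have he := hu e h
    rwa [dif_pos h] at he
  have liftB : ∀ (d : D) (m : ℕ) (X : ∀ e, d < e → B e m),
      (∀ d₁ d₂ (h1 : d < d₁) (hlt : d₁ < d₂), FB hlt.le m (X d₁ h1) = X d₂ (h1.trans hlt)) →
      ∃ u : B d m, ∀ e (h : d < e), FB h.le m u = X e h := by
    intro d m X hX
    have hcomp : ∀ d₁ d₂ : D, d < d₁ → d < d₂ → ∀ h12 : d₁ ≤ d₂,
        FB h12 m (if h : d < d₁ then X d₁ h else 0) = (if h : d < d₂ then X d₂ h else 0) := by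
      intro d₁ d₂ h1 h2 h12
      rw [dif_pos h1, dif_pos h2]
      rcases lt_or_eq_of_le h12 with hlt | heq
      · exact hX d₁ d₂ h1 hlt
      · subst heq; exact FBid _ _ _
    obtain ⟨u, hu⟩ := hSCB d m (fun e => if h : d < e then X e h else 0) hcomp
    refine ⟨u, fun e h => ?_⟩
    have he := hu e h
    rwa [dif_pos h] at he
  -- H⁰-surjectivity of lim A → lim B over any index set
  have limq1 : ∀ (S : D → Prop) (y : ∀ d, S d → B d 0),
      (∀ d₁ d₂ (h1 : S d₁) (h : d₁ ≤ d₂) (h2 : S d₂), FB h 0 (y d₁ h1) = y d₂ h2) →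
      (∀ d (h1 : S d), dB d 0 (y d h1) = 0) →
      ∃ x : ∀ d, S d → A d 0,
        (∀ d₁ d₂ (h1 : S d₁) (h : d₁ ≤ d₂) (h2 : S d₂), FA h 0 (x d₁ h1) = x d₂ h2) ∧
        (∀ d (h1 : S d), dA d 0 (x d h1) = 0) ∧ (∀ d (h1 : S d), η d 0 (x d h1) = y d h1) := by
    intro S y hyc hyd
    choose xf h1 h2 using fun d (hd : S d) => hq0surj d (y d hd) (hyd d hd)
    refine ⟨xf, ?_, h1, h2⟩
    intro d₁ d₂ hd₁ h hd₂
    have e1 : dA d₂ 0 (FA h 0 (xf d₁ hd₁) - xf d₂ hd₂) = 0 := by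
      rw [map_sub, ← hFAd d₁ d₂ h 0 (xf d₁ hd₁), h1 d₁ hd₁, map_zero, h1 d₂ hd₂, sub_zero]
    have e2 : η d₂ 0 (FA h 0 (xf d₁ hd₁) - xf d₂ hd₂) = 0 := by
      rw [map_sub, hηnat d₁ d₂ h 0 (xf d₁ hd₁), h2 d₁ hd₁, h2 d₂ hd₂,
        hyc d₁ d₂ hd₁ h hd₂, sub_self]
    have := hq0inj d₂ _ e1 e2
    rwa [sub_eq_zero] at this
  -- H⁰-injectivity (strong elementwise form)
  have limq2 : ∀ (S : D → Prop) (x : ∀ d, S d → A d 0),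
      (∀ d (h1 : S d), dA d 0 (x d h1) = 0) → (∀ d (h1 : S d), η d 0 (x d h1) = 0) →
      ∀ d (h1 : S d), x d h1 = 0 := by
    intro S x hxd hxe d hd
    exact hq0inj d (x d hd) (hxd d hd) (hxe d hd)
    -- Hⁿ⁺¹-surjectivity of lim A → lim B, by well-founded recursion using (SC) and KLem
  have limq3 : ∀ (S : D → Prop), (∀ ⦃a b : D⦄, S a → a < b → S b) →
      (∀ d, S d → KLem A B FA FB dA dB η d) →
      ∀ (n : ℕ) (y : ∀ d, S d → B d (n + 1)),
      (∀ d₁ d₂ (h1 : S d₁) (h : d₁ ≤ d₂) (h2 : S d₂), FB h (n+1) (y d₁ h1) = y d₂ h2) →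
      (∀ d (h1 : S d), dB d (n+1) (y d h1) = 0) →
      ∃ x : ∀ d, S d → A d (n+1),
        (∀ d₁ d₂ (h1 : S d₁) (h : d₁ ≤ d₂) (h2 : S d₂), FA h (n+1) (x d₁ h1) = x d₂ h2) ∧
        (∀ d (h1 : S d), dA d (n+1) (x d h1) = 0) ∧
        ∃ z : ∀ d, S d → B d n,
          (∀ d₁ d₂ (h1 : S d₁) (h : d₁ ≤ d₂) (h2 : S d₂), FB h n (z d₁ h1) = z d₂ h2) ∧
          (∀ d (h1 : S d), η d (n+1) (x d h1) - y d h1 = dB d n (z d h1)) := by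
    intro S hS hK n y hyc hyd
    have Hwdc := wf_dep_choice (r := fun a b : D => b < a) hwf htr
      (C := fun d => A d (n+1) × B d n) (fun d => ⟨0⟩)
      (R := fun d v g => ∀ hd : S d,
        (∀ e (h : d < e), FA h.le (n+1) v.1 = (g e h).1) ∧
        dA d (n+1) v.1 = 0 ∧
        (∀ e (h : d < e), FB h.le n v.2 = (g e h).2) ∧
        η d (n+1) v.1 - y d hd = dB d n v.2)
      ?step
    obtain ⟨f, hf⟩ := Hwdc
    · refine ⟨fun d _ => (f d).1, ?_, fun d hd => ((hf d) hd).2.1,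
        fun d _ => (f d).2, ?_, fun d hd => ((hf d) hd).2.2.2⟩
      · intro d₁ d₂ h1 h h2
        rcases lt_or_eq_of_le h with hlt | heq
        · exact ((hf d₁) h1).1 d₂ hlt
        · subst heq; exact FAid _ _ _
      · intro d₁ d₂ h1 h h2
        rcases lt_or_eq_of_le h with hlt | heq
        · exact ((hf d₁) h1).2.2.1 d₂ hlt
        · subst heq; exact FBid _ _ _
    case step =>
      intro d g hg
      by_cases hd : S d
      · obtain ⟨u, hu⟩ := liftA d (n+1) (fun e h => (g e h).1)
          (fun d₁ d₂ h1 hlt => ((hg d₁ h1) (hS hd h1)).1 d₂ hlt)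
        obtain ⟨t, ht⟩ := liftB d n (fun e h => (g e h).2)
          (fun d₁ d₂ h1 hlt => ((hg d₁ h1) (hS hd h1)).2.2.1 d₂ hlt)
        have hcK : ∀ e (h : d < e), FA h.le (n+1+1) (dA d (n+1) u) = 0 := by
          intro e h
          rw [hFAd d e h.le (n+1) u, hu e h, ((hg e h) (hS hd h)).2.1]
        have hcd : dA d (n+1+1) (dA d (n+1) u) = 0 := hdA d (n+1) u
        have he1K : ∀ e (h : d < e),
            FB h.le (n+1) (η d (n+1) u - y d hd - dB d n t) = 0 := by
          intro e h
          rw [map_sub, map_sub, ← hηnat d e h.le (n+1) u, hu e h,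
            hyc d e hd h.le (hS hd h), hFBd d e h.le n t, ht e h,
            ((hg e h) (hS hd h)).2.2.2, sub_self]
        have he1d : dB d (n+1) (η d (n+1) u - y d hd - dB d n t) = η d (n+1+1) (dA d (n+1) u) := by
          rw [map_sub, map_sub, hyd d hd, hdB d n t, hηd d (n+1) u, sub_zero, sub_zero]
        obtain ⟨k, hkK, hkd⟩ := ((hK d hd).2.1) (n+1) (dA d (n+1) u)
          (η d (n+1) u - y d hd - dB d n t) hcK hcd he1K he1d.symm
        have hw'K : ∀ e (h : d < e),
            FB h.le (n+1) ((η d (n+1) u - y d hd - dB d n t) - η d (n+1) k) = 0 := by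
          intro e h
          rw [map_sub, he1K e h, ← hηnat d e h.le (n+1) k, hkK e h, map_zero, sub_zero]
        have hw'd : dB d (n+1) ((η d (n+1) u - y d hd - dB d n t) - η d (n+1) k) = 0 := by
          rw [map_sub, he1d, ← hηd d (n+1) k, hkd, sub_self]
        obtain ⟨a, haK, had, b, hbK, hab⟩ := ((hK d hd).2.2) n
          (-((η d (n+1) u - y d hd - dB d n t) - η d (n+1) k))
          (by intro e h; rw [map_neg, hw'K e h, neg_zero])
          (by rw [map_neg, hw'd, neg_zero])
        rw [sub_neg_eq_add] at hab
        refine ⟨(u - k + a, t + b), fun hd' => ⟨?_, ?_, ?_, ?_⟩⟩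
        · intro e h
          rw [map_add, map_sub, hu e h, hkK e h, haK e h, sub_zero, add_zero]
        · rw [map_add, map_sub, hkd, had, sub_self, add_zero]
        · intro e h
          rw [map_add, ht e h, hbK e h, add_zero]
        · show η d (n+1) (u - k + a) - y d hd = dB d n (t + b)
          rw [map_add, map_sub, map_add]
          rw [← hab]
          abel
      · exact ⟨0, fun hd' => absurd hd' hd⟩
    -- Hⁿ⁺¹-injectivity of lim A → lim B, by well-founded recursion using (SC) and KLem
  have limq4 : ∀ (S : D → Prop), (∀ ⦃a b : D⦄, S a → a < b → S b) →
      (∀ d, S d → KLem A B FA FB dA dB η d) →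
      ∀ (n : ℕ) (x : ∀ d, S d → A d (n+1)),
      (∀ d₁ d₂ (h1 : S d₁) (h : d₁ ≤ d₂) (h2 : S d₂), FA h (n+1) (x d₁ h1) = x d₂ h2) →
      (∀ d (h1 : S d), dA d (n+1) (x d h1) = 0) →
      ∀ z : ∀ d, S d → B d n,
      (∀ d₁ d₂ (h1 : S d₁) (h : d₁ ≤ d₂) (h2 : S d₂), FB h n (z d₁ h1) = z d₂ h2) →
      (∀ d (h1 : S d), η d (n+1) (x d h1) = dB d n (z d h1)) →
      ∃ x' : ∀ d, S d → A d n,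
        (∀ d₁ d₂ (h1 : S d₁) (h : d₁ ≤ d₂) (h2 : S d₂), FA h n (x' d₁ h1) = x' d₂ h2) ∧
        (∀ d (h1 : S d), dA d n (x' d h1) = x d h1) := by
    intro S hS hK n
    cases n with
    | zero =>
      intro x hxc hxd z hzc hxz
      have Hwdc := wf_dep_choice (r := fun a b : D => b < a) hwf htr
        (C := fun d => A d 0) (fun d => ⟨0⟩)
        (R := fun d v g => ∀ hd : S d,
          (∀ e (h : d < e), FA h.le 0 v = g e h) ∧
          dA d 0 v = x d hd ∧ η d 0 v = z d hd)
        ?_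
      obtain ⟨f, hf⟩ := Hwdc
      · refine ⟨fun d hd => f d, ?_, fun d hd => ((hf d) hd).2.1⟩
        intro d₁ d₂ h1 h h2
        rcases lt_or_eq_of_le h with hlt | heq
        · exact ((hf d₁) h1).1 d₂ hlt
        · subst heq; exact FAid _ _ _
      · intro d g hg
        by_cases hd : S d
        · obtain ⟨u, hu⟩ := liftA d 0 (fun e h => g e h)
            (fun d₁ d₂ h1 hlt => ((hg d₁ h1) (hS hd h1)).1 d₂ hlt)
          have hcK : ∀ e (h : d < e), FA h.le 1 (dA d 0 u - x d hd) = 0 := by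
            intro e h
            rw [map_sub, hFAd d e h.le 0 u, hu e h, ((hg e h) (hS hd h)).2.1,
              hxc d e hd h.le (hS hd h), sub_self]
          have hcd : dA d 1 (dA d 0 u - x d hd) = 0 := by
            rw [map_sub, hdA d 0 u, hxd d hd, sub_self]
          have hwK : ∀ e (h : d < e), FB h.le 0 (η d 0 u - z d hd) = 0 := by
            intro e h
            rw [map_sub, ← hηnat d e h.le 0 u, hu e h, ((hg e h) (hS hd h)).2.2,
              hzc d e hd h.le (hS hd h), sub_self]
          have hwd : η d 1 (dA d 0 u - x d hd) = dB d 0 (η d 0 u - z d hd) := by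
            rw [map_sub, map_sub, hηd d 0 u, hxz d hd]
          obtain ⟨k, hkK, hkd⟩ := ((hK d hd).2.1) 0 (dA d 0 u - x d hd)
            (η d 0 u - z d hd) hcK hcd hwK hwd
          have hw'K : ∀ e (h : d < e), FB h.le 0 ((η d 0 u - z d hd) - η d 0 k) = 0 := by
            intro e h
            rw [map_sub, hwK e h, ← hηnat d e h.le 0 k, hkK e h, map_zero, sub_zero]
          have hw'd : dB d 0 ((η d 0 u - z d hd) - η d 0 k) = 0 := by
            rw [map_sub, ← hwd, ← hηd d 0 k, hkd, sub_self]
          obtain ⟨a, haK, had, haw⟩ := ((hK d hd).1) ((η d 0 u - z d hd) - η d 0 k) hw'K hw'd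
          refine ⟨u - k - a, fun hd' => ⟨?_, ?_, ?_⟩⟩
          · intro e h
            rw [map_sub, map_sub, hu e h, hkK e h, haK e h, sub_zero, sub_zero]
          · show dA d 0 (u - k - a) = x d hd
            rw [map_sub, map_sub, hkd, had]
            abel
          · show η d 0 (u - k - a) = z d hd
            rw [map_sub, map_sub, haw]
            abel
        · exact ⟨0, fun hd' => absurd hd' hd⟩
    | succ n =>
      intro x hxc hxd z hzc hxz
      have Hwdc := wf_dep_choice (r := fun a b : D => b < a) hwf htr
        (C := fun d => A d (n+1) × B d n) (fun d => ⟨0⟩)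
        (R := fun d v g => ∀ hd : S d,
          (∀ e (h : d < e), FA h.le (n+1) v.1 = (g e h).1) ∧
          dA d (n+1) v.1 = x d hd ∧
          (∀ e (h : d < e), FB h.le n v.2 = (g e h).2) ∧
          η d (n+1) v.1 - z d hd = dB d n v.2)
        ?_
      obtain ⟨f, hf⟩ := Hwdc
      · refine ⟨fun d hd => (f d).1, ?_, fun d hd => ((hf d) hd).2.1⟩
        intro d₁ d₂ h1 h h2
        rcases lt_or_eq_of_le h with hlt | heq
        · exact ((hf d₁) h1).1 d₂ hlt
        · subst heq; exact FAid _ _ _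
      · intro d g hg
        by_cases hd : S d
        · obtain ⟨u, hu⟩ := liftA d (n+1) (fun e h => (g e h).1)
            (fun d₁ d₂ h1 hlt => ((hg d₁ h1) (hS hd h1)).1 d₂ hlt)
          obtain ⟨t, ht⟩ := liftB d n (fun e h => (g e h).2)
            (fun d₁ d₂ h1 hlt => ((hg d₁ h1) (hS hd h1)).2.2.1 d₂ hlt)
          have hcK : ∀ e (h : d < e), FA h.le (n+1+1) (dA d (n+1) u - x d hd) = 0 := by
            intro e h
            rw [map_sub, hFAd d e h.le (n+1) u, hu e h, ((hg e h) (hS hd h)).2.1,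
              hxc d e hd h.le (hS hd h), sub_self]
          have hcd : dA d (n+1+1) (dA d (n+1) u - x d hd) = 0 := by
            rw [map_sub, hdA d (n+1) u, hxd d hd, sub_self]
          have hwK : ∀ e (h : d < e),
              FB h.le (n+1) (η d (n+1) u - z d hd - dB d n t) = 0 := by
            intro e h
            rw [map_sub, map_sub, ← hηnat d e h.le (n+1) u, hu e h,
              hzc d e hd h.le (hS hd h), hFBd d e h.le n t, ht e h,
              ((hg e h) (hS hd h)).2.2.2, sub_self]
          have hwd : η d (n+1+1) (dA d (n+1) u - x d hd)
              = dB d (n+1) (η d (n+1) u - z d hd - dB d n t) := by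
            rw [map_sub, map_sub, map_sub, hηd d (n+1) u, hxz d hd, hdB d n t, sub_zero]
          obtain ⟨k, hkK, hkd⟩ := ((hK d hd).2.1) (n+1) (dA d (n+1) u - x d hd)
            (η d (n+1) u - z d hd - dB d n t) hcK hcd hwK hwd
          have hw'K : ∀ e (h : d < e),
              FB h.le (n+1) ((η d (n+1) u - z d hd - dB d n t) - η d (n+1) k) = 0 := by
            intro e h
            rw [map_sub, hwK e h, ← hηnat d e h.le (n+1) k, hkK e h, map_zero, sub_zero]
          have hw'd : dB d (n+1) ((η d (n+1) u - z d hd - dB d n t) - η d (n+1) k) = 0 := by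
            rw [map_sub, ← hwd, ← hηd d (n+1) k, hkd, sub_self]
          obtain ⟨a, haK, had, b, hbK, hab⟩ := ((hK d hd).2.2) n
            ((η d (n+1) u - z d hd - dB d n t) - η d (n+1) k) hw'K hw'd
          refine ⟨(u - k - a, t - b), fun hd' => ⟨?_, ?_, ?_, ?_⟩⟩
          · intro e h
            rw [map_sub, map_sub, hu e h, hkK e h, haK e h, sub_zero, sub_zero]
          · show dA d (n+1) (u - k - a) = x d hd
            rw [map_sub, map_sub, hkd, had]
            abel
          · intro e h
            rw [map_sub, ht e h, hbK e h, sub_zero]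
          · show η d (n+1) (u - k - a) - z d hd = dB d n (t - b)
            rw [map_sub, map_sub, map_sub]
            rw [sub_eq_iff_eq_add] at hab
            rw [hab]
            abel
        · exact ⟨0, fun hd' => absurd hd' hd⟩
    -- the kernel lemmas hold at every point, by well-founded induction
  have master : ∀ d : D, KLem A B FA FB dA dB η d := by
    intro d0
    refine hwf.induction (C := fun d => KLem A B FA FB dA dB η d) d0 ?_
    intro d IH
    have hS : ∀ ⦃a b : D⦄, d < a → a < b → d < b := fun a b ha hab => lt_trans ha hab
    have hKup : ∀ e, d < e → KLem A B FA FB dA dB η e := fun e he => IH e he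
    refine ⟨?_, ?_, ?_⟩
    · -- K0surj
      intro w hwK hwd
      obtain ⟨a, had, haw⟩ := hq0surj d w hwd
      have hz : ∀ e (h : d < e), FA h.le 0 a = 0 := by
        refine limq2 (fun e => d < e) (fun e h => FA h.le 0 a) ?_ ?_
        · intro e h
          rw [← hFAd d e h.le 0 a, had, map_zero]
        · intro e h
          rw [hηnat d e h.le 0 a, haw, hwK e h]
      exact ⟨a, hz, had, haw⟩
    · -- Kinj
      intro m c w hcK hcd hwK hcw
      obtain ⟨a', ha'⟩ := hqinj d m c hcd ⟨w, hcw⟩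
      cases m with
      | zero =>
        have hb1 : dB d 0 (η d 0 a' - w) = 0 := by
          rw [map_sub, ← hηd d 0 a', ha', hcw, sub_self]
        obtain ⟨a₁, ha₁d, ha₁w⟩ := hq0surj d (η d 0 a' - w) hb1
        have hz : ∀ e (h : d < e), FA h.le 0 (a' - a₁) = 0 := by
          refine limq2 (fun e => d < e) (fun e h => FA h.le 0 (a' - a₁)) ?_ ?_
          · intro e h
            rw [← hFAd d e h.le 0 (a' - a₁), map_sub, ha', ha₁d, sub_zero]
            exact hcK e h
          · intro e h
            rw [hηnat d e h.le 0 (a' - a₁), map_sub, ha₁w, sub_sub_cancel, hwK e h]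
        exact ⟨a' - a₁, hz, by rw [map_sub, ha', ha₁d, sub_zero]⟩
      | succ m =>
        have hb1 : dB d (m+1) (η d (m+1) a' - w) = 0 := by
          rw [map_sub, ← hηd d (m+1) a', ha', hcw, sub_self]
        obtain ⟨a₁, ha₁d, b₂, hb₂⟩ := hqsurj d m (η d (m+1) a' - w) hb1
        have h5 : η d (m+1) a' - η d (m+1) a₁ = w - dB d m b₂ := by
          rw [← hb₂]; abel
        have hXd : ∀ e (h : d < e), dA e (m+1) (FA h.le (m+1) (a' - a₁)) = 0 := by
          intro e h
          rw [← hFAd d e h.le (m+1) (a' - a₁), map_sub, ha', ha₁d, sub_zero, hcK e h]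
        have hXc : ∀ d₁ d₂ (h1 : d < d₁) (h : d₁ ≤ d₂) (h2 : d < d₂),
            FA h (m+1) (FA h1.le (m+1) (a' - a₁)) = FA h2.le (m+1) (a' - a₁) :=
          fun d₁ d₂ h1 h h2 => FAcomp h1.le h (m+1) (a' - a₁)
        have hZc : ∀ d₁ d₂ (h1 : d < d₁) (h : d₁ ≤ d₂) (h2 : d < d₂),
            FB h m (FB h1.le m (-b₂)) = FB h2.le m (-b₂) :=
          fun d₁ d₂ h1 h h2 => FBcomp h1.le h m (-b₂)
        have hXz : ∀ e (h : d < e),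
            η e (m+1) (FA h.le (m+1) (a' - a₁)) = dB e m (FB h.le m (-b₂)) := by
          intro e h
          rw [hηnat d e h.le (m+1) (a' - a₁), map_sub, h5, map_sub, hwK e h,
            hFBd d e h.le m b₂, zero_sub, map_neg, map_neg]
        obtain ⟨X', hX'c, hX'd⟩ := limq4 (fun e => d < e) hS hKup m
          (fun e h => FA h.le (m+1) (a' - a₁)) hXc hXd
          (fun e h => FB h.le m (-b₂)) hZc hXz
        obtain ⟨a₂, ha₂⟩ := liftA d m X'
          (fun d₁ d₂ h1 hlt => hX'c d₁ d₂ h1 hlt.le (h1.trans hlt))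
        refine ⟨a' - a₁ - dA d m a₂, ?_, ?_⟩
        · intro e h
          rw [map_sub, hFAd d e h.le m a₂, ha₂ e h, hX'd e h, sub_self]
        · rw [map_sub, map_sub, ha', ha₁d, hdA d m a₂, sub_zero, sub_zero]
    · -- Ksurj
      intro m w hwK hwd
      obtain ⟨a₀, ha₀d, b₀, hb₀⟩ := hqsurj d m w hwd
      have h6 : η d (m+1) a₀ = w + dB d m b₀ := by rw [← hb₀]; abel
      have hXd : ∀ e (h : d < e), dA e (m+1) (FA h.le (m+1) a₀) = 0 := by
        intro e h
        rw [← hFAd d e h.le (m+1) a₀, ha₀d, map_zero]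
      have hXc : ∀ d₁ d₂ (h1 : d < d₁) (h : d₁ ≤ d₂) (h2 : d < d₂),
          FA h (m+1) (FA h1.le (m+1) a₀) = FA h2.le (m+1) a₀ :=
        fun d₁ d₂ h1 h h2 => FAcomp h1.le h (m+1) a₀
      have hZc : ∀ d₁ d₂ (h1 : d < d₁) (h : d₁ ≤ d₂) (h2 : d < d₂),
          FB h m (FB h1.le m b₀) = FB h2.le m b₀ :=
        fun d₁ d₂ h1 h h2 => FBcomp h1.le h m b₀
      have hXz : ∀ e (h : d < e),
          η e (m+1) (FA h.le (m+1) a₀) = dB e m (FB h.le m b₀) := by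
        intro e h
        rw [hηnat d e h.le (m+1) a₀, h6, map_add, hwK e h, hFBd d e h.le m b₀, zero_add]
      obtain ⟨X', hX'c, hX'd⟩ := limq4 (fun e => d < e) hS hKup m
        (fun e h => FA h.le (m+1) a₀) hXc hXd (fun e h => FB h.le m b₀) hZc hXz
      obtain ⟨a₂, ha₂⟩ := liftA d m X'
        (fun d₁ d₂ h1 hlt => hX'c d₁ d₂ h1 hlt.le (h1.trans hlt))
      have haK : ∀ e (h : d < e), FA h.le (m+1) (a₀ - dA d m a₂) = 0 := by
        intro e h
        rw [map_sub, hFAd d e h.le m a₂, ha₂ e h, hX'd e h, sub_self]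
      have had : dA d (m+1) (a₀ - dA d m a₂) = 0 := by
        rw [map_sub, ha₀d, hdA d m a₂, sub_zero]
      have hab : η d (m+1) (a₀ - dA d m a₂) - w = dB d m (b₀ - η d m a₂) := by
        rw [map_sub, map_sub, hηd d m a₂, ← hb₀]
        abel
      have hYd : ∀ e (h : d < e), dB e m (FB h.le m (b₀ - η d m a₂)) = 0 := by
        intro e h
        rw [← hFBd d e h.le m (b₀ - η d m a₂), ← hab, map_sub,
          ← hηnat d e h.le (m+1) (a₀ - dA d m a₂), haK e h, map_zero, hwK e h, sub_zero]
      have hYc : ∀ d₁ d₂ (h1 : d < d₁) (h : d₁ ≤ d₂) (h2 : d < d₂),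
          FB h m (FB h1.le m (b₀ - η d m a₂)) = FB h2.le m (b₀ - η d m a₂) :=
        fun d₁ d₂ h1 h h2 => FBcomp h1.le h m (b₀ - η d m a₂)
      cases m with
      | zero =>
        obtain ⟨U, hUc, hUd, hUz⟩ := limq1 (fun e => d < e)
          (fun e h => FB h.le 0 (b₀ - η d 0 a₂)) hYc hYd
        obtain ⟨a₃, ha₃⟩ := liftA d 0 U
          (fun d₁ d₂ h1 hlt => hUc d₁ d₂ h1 hlt.le (h1.trans hlt))
        refine ⟨a₀ - dA d 0 a₂ - dA d 0 a₃, ?_, ?_, b₀ - η d 0 a₂ - η d 0 a₃, ?_, ?_⟩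
        · intro e h
          rw [map_sub, haK e h, hFAd d e h.le 0 a₃, ha₃ e h, hUd e h, sub_zero]
        · rw [map_sub, had, hdA d 0 a₃, sub_zero]
        · intro e h
          rw [map_sub, ← hηnat d e h.le 0 a₃, ha₃ e h, hUz e h, sub_self]
        · simp only [map_sub]
          rw [hηd d 0 a₂, hηd d 0 a₃, ← hb₀]
          abel
      | succ m =>
        obtain ⟨U, hUc, hUd, Z₂, hZ₂c, hUz⟩ := limq3 (fun e => d < e) hS hKup m
          (fun e h => FB h.le (m+1) (b₀ - η d (m+1) a₂)) hYc hYd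
        obtain ⟨a₃, ha₃⟩ := liftA d (m+1) U
          (fun d₁ d₂ h1 hlt => hUc d₁ d₂ h1 hlt.le (h1.trans hlt))
        obtain ⟨b₄, hb₄⟩ := liftB d m Z₂
          (fun d₁ d₂ h1 hlt => hZ₂c d₁ d₂ h1 hlt.le (h1.trans hlt))
        refine ⟨a₀ - dA d (m+1) a₂ - dA d (m+1) a₃, ?_, ?_,
          b₀ - η d (m+1) a₂ - η d (m+1) a₃ + dB d m b₄, ?_, ?_⟩
        · intro e h
          rw [map_sub, haK e h, hFAd d e h.le (m+1) a₃, ha₃ e h, hUd e h, sub_zero]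
        · rw [map_sub, had, hdA d (m+1) a₃, sub_zero]
        · intro e h
          rw [map_add, map_sub, ← hηnat d e h.le (m+1) a₃, ha₃ e h,
            hFBd d e h.le m b₄, hb₄ e h, ← hUz e h]
          abel
        · simp only [map_sub, map_add]
          rw [hηd d (m+1) a₂, hηd d (m+1) a₃, hdB d m b₄, ← hb₀]
          abel
    -- conclude, taking `S` to be everything
  have hT : ∀ ⦃a b : D⦄, (fun _ : D => True) a → a < b → (fun _ : D => True) b :=
    fun a b _ _ => trivial
  have hKall : ∀ d : D, (fun _ : D => True) d → KLem A B FA FB dA dB η d :=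
    fun d _ => master d
  refine ⟨?_, ?_, ?_, ?_⟩
  · intro y hyc hyd
    obtain ⟨x, hxc, hxd, hxe⟩ := limq1 (fun _ => True) (fun d _ => y d)
      (fun d₁ d₂ _ h _ => hyc d₁ d₂ h) (fun d _ => hyd d)
    exact ⟨fun d => x d trivial, fun d₁ d₂ h => hxc d₁ d₂ trivial h trivial,
      fun d => hxd d trivial, fun d => hxe d trivial⟩
  · intro x hxc hxd hxe d
    exact limq2 (fun _ => True) (fun d _ => x d) (fun d _ => hxd d) (fun d _ => hxe d) d trivial
  · intro n y hyc hyd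
    obtain ⟨x, hxc, hxd, z, hzc, hze⟩ := limq3 (fun _ => True) hT hKall n (fun d _ => y d)
      (fun d₁ d₂ _ h _ => hyc d₁ d₂ h) (fun d _ => hyd d)
    exact ⟨fun d => x d trivial, fun d₁ d₂ h => hxc d₁ d₂ trivial h trivial,
      fun d => hxd d trivial,
      ⟨fun d => z d trivial, fun d₁ d₂ h => hzc d₁ d₂ trivial h trivial,
        fun d => hze d trivial⟩⟩
  · intro n x hxc hxd hz
    obtain ⟨z, hzc, hze⟩ := hz
    obtain ⟨x', hx'c, hx'd⟩ := limq4 (fun _ => True) hT hKall n (fun d _ => x d)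
      (fun d₁ d₂ _ h _ => hxc d₁ d₂ h) (fun d _ => hxd d) (fun d _ => z d)
      (fun d₁ d₂ _ h _ => hzc d₁ d₂ h) (fun d _ => hze d)
    exact ⟨fun d => x' d trivial, fun d₁ d₂ h => hx'c d₁ d₂ trivial h trivial,
      fun d => hx'd d trivial⟩
end

section
/- Let A be a cdga over ℚ, and let S ⊂ (t,dt) × (s,ds) × (t,dt) × (s,ds) be the sub-cdga of tuples (a,b,c,d) with ev_{t=1}(a) = ev_{s=0}(b), ev_{s=1}(b) = ev_{t=1}(c), ev_{t=0}(c) = ev_{s=1}(d), ev_{s=0}(d) = ev_{t=0}(a). Then the map (s,ds) ⊗ (t,dt) → S given by (q_{s=0}, q_{t=1}, q_{s=1}, q_{t=0}) is a well-defined surjective cdga morphism, and H*(S) ≅ H*(S¹;ℚ), i.e. H⁰(S) = ℚ, H¹(S) = ℚ, and Hⁱ(S) = 0 for i ≥ 2. -/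
/-! STATEMENT 14: Let `S ⊂ (t,dt) × (s,ds) × (t,dt) × (s,ds)` be the sub-cdga of tuples
`(a,b,c,d)` with `ev_{t=1}(a) = ev_{s=0}(b)`, `ev_{s=1}(b) = ev_{t=1}(c)`,
`ev_{t=0}(c) = ev_{s=1}(d)`, `ev_{s=0}(d) = ev_{t=0}(a)`.  Then the map
`(s,ds) ⊗ (t,dt) → S` given by `(q_{s=0}, q_{t=1}, q_{s=1}, q_{t=0})` is a well-defined
surjective cdga morphism, and `H*(S) ≅ H*(S¹;ℚ)`: `H⁰(S) = ℚ`, `H¹(S) = ℚ`, `Hⁱ(S) = 0`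
for `i ≥ 2`.

Concrete models: an interval cdga `(t,dt)` is `ℚ[t] ⊕ ℚ[t]·dt`, i.e. the dual numbers
over `ℚ[t]`, with differential `p + q·dt ↦ p'·dt` and evaluations `ev_{t=r}`;
`(s,ds) ⊗ (t,dt)` is `R ⊕ R·ds ⊕ R·dt ⊕ R·ds∧dt` with `R = ℚ[s,t]`, encoded as four
components with the (Koszul-signed) multiplication and de Rham differential written out
explicitly. -/

set_option maxHeartbeats 1600000

noncomputable section

/-- `ℚ[s,t]`; variable `0` is `s`, variable `1` is `t`. -/
abbrev RR : Type := MvPolynomial (Fin 2) ℚ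

/-- the cdga `(s,ds) ⊗ (t,dt)`: components `(a, b·ds, c·dt, e·ds∧dt)`. -/
abbrev Om : Type := RR × RR × RR × RR

/-- multiplication of `(s,ds) ⊗ (t,dt)` (with Koszul signs). -/
def omul (x y : Om) : Om :=
  (x.1 * y.1,
   x.1 * y.2.1 + x.2.1 * y.1,
   x.1 * y.2.2.1 + x.2.2.1 * y.1,
   x.1 * y.2.2.2 + x.2.2.2 * y.1 + x.2.1 * y.2.2.1 - x.2.2.1 * y.2.1)

/-- the unit of `(s,ds) ⊗ (t,dt)`. -/
def oone : Om := (1, 0, 0, 0)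

/-- the differential of `(s,ds) ⊗ (t,dt)`. -/
def od (x : Om) : Om :=
  (0, MvPolynomial.pderiv 0 x.1, MvPolynomial.pderiv 1 x.1,
   MvPolynomial.pderiv 0 x.2.2.1 - MvPolynomial.pderiv 1 x.2.1)

/-- an interval cdga `(t,dt) = ℚ[t] ⊕ ℚ[t]·dt`. -/
abbrev II : Type := DualNumber (Polynomial ℚ)

/-- the differential of the interval cdga. -/
def dI (z : II) : II := (0, Polynomial.derivative (TrivSqZeroExt.fst z))

/-- the evaluation `ev_{t=r} : (t,dt) → ℚ`. -/
def ev (r : ℚ) (z : II) : ℚ := (TrivSqZeroExt.fst z).eval r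

/-- the ambient product `(t,dt) × (s,ds) × (t,dt) × (s,ds)`. -/
abbrev WW : Type := II × II × II × II

/-- differential of the product. -/
def dW (w : WW) : WW := (dI w.1, dI w.2.1, dI w.2.2.1, dI w.2.2.2)

/-- `S`, the algebraic model of the boundary of the square. -/
def Sset : Set WW :=
  {w | ev 1 w.1 = ev 0 w.2.1 ∧ ev 1 w.2.1 = ev 1 w.2.2.1 ∧
       ev 0 w.2.2.1 = ev 1 w.2.2.2 ∧ ev 0 w.2.2.2 = ev 0 w.1}

/-- evaluation `s := r` (resp. `t := r`), landing in polynomials in the other variable. -/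
def evs (r : ℚ) : RR →ₐ[ℚ] Polynomial ℚ :=
  MvPolynomial.aeval fun i : Fin 2 => if i = 0 then Polynomial.C r else Polynomial.X

def evt (r : ℚ) : RR →ₐ[ℚ] Polynomial ℚ :=
  MvPolynomial.aeval fun i : Fin 2 => if i = 1 then Polynomial.C r else Polynomial.X

/-- the map `(q_{s=0}, q_{t=1}, q_{s=1}, q_{t=0}) : (s,ds) ⊗ (t,dt) → (t,dt)×(s,ds)×(t,dt)×(s,ds)`. -/
def Phi (x : Om) : WW :=
  ((evs 0 x.1, evs 0 x.2.2.1),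
   (evt 1 x.1, evt 1 x.2.1),
   (evs 1 x.1, evs 1 x.2.2.1),
   (evt 0 x.1, evt 0 x.2.1))

/-- degree-0 (resp. degree-1) elements of the ambient product. -/
def deg0 (w : WW) : Prop :=
  TrivSqZeroExt.snd w.1 = 0 ∧ TrivSqZeroExt.snd w.2.1 = 0 ∧
  TrivSqZeroExt.snd w.2.2.1 = 0 ∧ TrivSqZeroExt.snd w.2.2.2 = 0

def deg1 (w : WW) : Prop :=
  TrivSqZeroExt.fst w.1 = 0 ∧ TrivSqZeroExt.fst w.2.1 = 0 ∧
  TrivSqZeroExt.fst w.2.2.1 = 0 ∧ TrivSqZeroExt.fst w.2.2.2 = 0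

open Polynomial MvPolynomial

-- evaluation lemmas
@[simp] lemma evs_X0 (r : ℚ) : evs r (X 0) = Polynomial.C r := by simp [evs]
@[simp] lemma evs_X1 (r : ℚ) : evs r (X 1) = Polynomial.X := by simp [evs]
@[simp] lemma evt_X0 (r : ℚ) : evt r (X 0) = Polynomial.X := by simp [evt]
@[simp] lemma evt_X1 (r : ℚ) : evt r (X 1) = Polynomial.C r := by simp [evt]

lemma deriv_evs (r : ℚ) (p : RR) :
    derivative (evs r p) = evs r (pderiv 1 p) := by
  induction p using MvPolynomial.induction_on with
  | C a => simp
  | add p q hp hq => simp [map_add, hp, hq]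
  | mul_X p i hp =>
    rw [map_mul, derivative_mul, pderiv_mul, map_add, map_mul, map_mul, hp]
    fin_cases i <;> simp

lemma deriv_evt (r : ℚ) (p : RR) :
    derivative (evt r p) = evt r (pderiv 0 p) := by
  induction p using MvPolynomial.induction_on with
  | C a => simp
  | add p q hp hq => simp [map_add, hp, hq]
  | mul_X p i hp =>
    rw [map_mul, derivative_mul, pderiv_mul, map_add, map_mul, map_mul, hp]
    fin_cases i <;> simp

lemma eval_evs (a r : ℚ) (p : RR) :
    (evs r p).eval a = MvPolynomial.eval (fun i : Fin 2 => if i = 0 then r else a) p := by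
  induction p using MvPolynomial.induction_on with
  | C c => simp [evs]
  | add p q hp hq => simp [map_add, hp, hq]
  | mul_X p i hp =>
    rw [map_mul, Polynomial.eval_mul, hp, map_mul]
    fin_cases i <;> simp

lemma eval_evt (a r : ℚ) (p : RR) :
    (evt r p).eval a = MvPolynomial.eval (fun i : Fin 2 => if i = 1 then r else a) p := by
  induction p using MvPolynomial.induction_on with
  | C c => simp [evt]
  | add p q hp hq => simp [map_add, hp, hq]
  | mul_X p i hp =>
    rw [map_mul, Polynomial.eval_mul, hp, map_mul]
    fin_cases i <;> simp

lemma evs_lT (r : ℚ) (p : Polynomial ℚ) :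
    evs r (Polynomial.aeval (X 1 : RR) p) = p := by
  rw [← Polynomial.aeval_algHom_apply (evs r) (X 1) p, evs_X1, Polynomial.aeval_X_left_apply]

lemma evt_lS (r : ℚ) (p : Polynomial ℚ) :
    evt r (Polynomial.aeval (X 0 : RR) p) = p := by
  rw [← Polynomial.aeval_algHom_apply (evt r) (X 0) p, evt_X0, Polynomial.aeval_X_left_apply]

lemma evs_lS (r : ℚ) (p : Polynomial ℚ) :
    evs r (Polynomial.aeval (X 0 : RR) p) = Polynomial.C (p.eval r) := by
  rw [← Polynomial.aeval_algHom_apply (evs r) (X 0) p, evs_X0,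
    ← Polynomial.algebraMap_eq, Polynomial.aeval_algebraMap_apply_eq_algebraMap_eval]

lemma evt_lT (r : ℚ) (p : Polynomial ℚ) :
    evt r (Polynomial.aeval (X 1 : RR) p) = Polynomial.C (p.eval r) := by
  rw [← Polynomial.aeval_algHom_apply (evt r) (X 1) p, evt_X1,
    ← Polynomial.algebraMap_eq, Polynomial.aeval_algebraMap_apply_eq_algebraMap_eval]

-- antiderivative
def antider (p : Polynomial ℚ) : Polynomial ℚ :=
  p.sum fun n a => Polynomial.C (a / (n + 1)) * Polynomial.X ^ (n + 1)

lemma derivative_antider (p : Polynomial ℚ) : derivative (antider p) = p := by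
  conv_rhs => rw [← p.sum_monomial_eq]
  rw [antider, Polynomial.sum_def, Polynomial.sum_def, map_sum]
  refine Finset.sum_congr rfl fun n _ => ?_
  rw [derivative_C_mul, derivative_X_pow]
  push_cast
  rw [← mul_assoc, ← Polynomial.C_mul, div_mul_cancel₀,
    Polynomial.C_mul_X_pow_eq_monomial]
  positivity

lemma eval_zero_antider (p : Polynomial ℚ) : (antider p).eval 0 = 0 := by
  rw [antider, Polynomial.sum_def, eval_finset_sum]
  refine Finset.sum_eq_zero fun n _ => ?_
  simp

lemma antider_C (q : ℚ) : antider (Polynomial.C q) = Polynomial.C q * Polynomial.X := by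
  rw [antider, Polynomial.sum_C_index] <;> simp

lemma eval_one_antider_C (q : ℚ) : (antider (Polynomial.C q)).eval 1 = q := by
  rw [antider_C]; simp

lemma const_of_deriv_zero {p : Polynomial ℚ} (h : derivative p = 0) :
    p = Polynomial.C (p.eval 0) := by
  have := Polynomial.eq_C_of_derivative_eq_zero h
  rw [this]; simp

lemma eval_sub_eq_antider (P : Polynomial ℚ) :
    P.eval 1 - P.eval 0 = (antider (derivative P)).eval 1 := by
  have h : derivative (P - antider (derivative P)) = 0 := by
    simp [derivative_antider]
  have h2 := const_of_deriv_zero h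
  have := congrArg (Polynomial.eval 1) h2
  simp [eval_zero_antider] at this
  linarith



-- eval with explicit value vectors
lemma eval_evs' (a r : ℚ) (p : RR) :
    (evs r p).eval a = MvPolynomial.eval ![r, a] p := by
  have h : (fun i : Fin 2 => if i = 0 then r else a) = ![r, a] := by
    funext i; fin_cases i <;> simp
  rw [eval_evs, h]

lemma eval_evt' (a r : ℚ) (p : RR) :
    (evt r p).eval a = MvPolynomial.eval ![a, r] p := by
  have h : (fun i : Fin 2 => if i = 1 then r else a) = ![a, r] := by
    funext i; fin_cases i <;> simp
  rw [eval_evt, h]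

@[simp] lemma evs_C (r c : ℚ) : evs r (MvPolynomial.C c) = Polynomial.C c := by
  simp [evs, Polynomial.algebraMap_eq]

@[simp] lemma evt_C (r c : ℚ) : evt r (MvPolynomial.C c) = Polynomial.C c := by
  simp [evt, Polynomial.algebraMap_eq]

@[simp] lemma tfst (a b : Polynomial ℚ) : TrivSqZeroExt.fst ((a, b) : II) = a := rfl
@[simp] lemma tsnd (a b : Polynomial ℚ) : TrivSqZeroExt.snd ((a, b) : II) = b := rfl
@[simp] lemma tadd (a b c d : Polynomial ℚ) :
    @HAdd.hAdd II II II _ (a, b) (c, d) = ((a + c, b + d) : II) := rfl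
@[simp] lemma tsmul (q : ℚ) (a b : Polynomial ℚ) :
    @HSMul.hSMul ℚ II II _ q (a, b) = ((q • a, q • b) : II) := rfl
@[simp] lemma tmul (a b c d : Polynomial ℚ) :
    @HMul.hMul II II II _ (a, b) (c, d) = ((a * c, a * d + b * c) : II) := by
  apply TrivSqZeroExt.ext
  · rfl
  · show a • d + MulOpposite.op c • b = a * d + b * c
    rw [smul_eq_mul, op_smul_eq_mul]
@[simp] lemma tzero_add (a b : Polynomial ℚ) :
    @HAdd.hAdd II II II _ 0 (a, b) = ((a, b) : II) := zero_add _

lemma wext {u v : WW} (h1 : u.1 = v.1) (h2 : u.2.1 = v.2.1) (h3 : u.2.2.1 = v.2.2.1)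
    (h4 : u.2.2.2 = v.2.2.2) : u = v :=
  Prod.ext h1 (Prod.ext h2 (Prod.ext h3 h4))

lemma eval_one_eq_of_deriv_zero {p : Polynomial ℚ} (h : derivative p = 0) :
    p.eval 1 = p.eval 0 := by
  conv_lhs => rw [const_of_deriv_zero h]
  simp

theorem stmt_14 :
    -- `Phi` is a morphism of cdgas:
    (Phi oone = 1) ∧
    (∀ x y : Om, Phi (x + y) = Phi x + Phi y) ∧
    (∀ (q : ℚ) (x : Om), Phi (q • x) = q • Phi x) ∧
    (∀ x y : Om, Phi (omul x y) = Phi x * Phi y) ∧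
    (∀ x : Om, Phi (od x) = dW (Phi x)) ∧
    -- it is well defined with values in `S` and surjective onto `S`:
    (∀ x : Om, Phi x ∈ Sset) ∧
    (∀ w ∈ Sset, ∃ x : Om, Phi x = w) ∧
    -- `S` is concentrated in degrees 0 and 1, so `Hⁱ(S) = 0` for `i ≥ 2`:
    (∀ w ∈ Sset, ∃ w₀ w₁ : WW, w₀ ∈ Sset ∧ w₁ ∈ Sset ∧ deg0 w₀ ∧ deg1 w₁ ∧ w = w₀ + w₁) ∧
    -- `H⁰(S) = ℚ`:
    (∀ w ∈ Sset, deg0 w → dW w = 0 → ∃ q : ℚ, w = q • (1 : WW)) ∧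
    -- `H¹(S) = ℚ`, generated by a nonexact closed 1-form `ω` (every degree-1 element of
    -- `S` is closed since `S` vanishes in degree 2):
    (∃ ω ∈ Sset, deg1 ω ∧
      (∀ η ∈ Sset, deg1 η → ∃ (q : ℚ), ∃ z ∈ Sset, deg0 z ∧ η = q • ω + dW z) ∧
      (∀ q : ℚ, ∀ z ∈ Sset, deg0 z → q • ω = dW z → q = 0)) := by
  obtain ⟨part1, part2, part3, part4, part5, part6⟩ :
      (Phi oone = 1) ∧ (∀ x y : Om, Phi (x + y) = Phi x + Phi y) ∧
      (∀ (q : ℚ) (x : Om), Phi (q • x) = q • Phi x) ∧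
      (∀ x y : Om, Phi (omul x y) = Phi x * Phi y) ∧
      (∀ x : Om, Phi (od x) = dW (Phi x)) ∧ (∀ x : Om, Phi x ∈ Sset) := by
    refine ⟨?_, ?_, ?_, ?_, ?_, ?_⟩
    · apply wext <;> apply TrivSqZeroExt.ext <;>
        simp [Phi, oone, TrivSqZeroExt.fst_one, TrivSqZeroExt.snd_one]
    · intro x y
      apply wext <;> apply TrivSqZeroExt.ext <;>
        simp [Phi, map_add, TrivSqZeroExt.fst_add, TrivSqZeroExt.snd_add]
    · intro q x
      apply wext <;> apply TrivSqZeroExt.ext <;>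
        simp [Phi, map_smul, TrivSqZeroExt.fst_smul, TrivSqZeroExt.snd_smul]
    · intro x y
      apply wext <;> apply TrivSqZeroExt.ext <;>
        simp [Phi, omul, TrivSqZeroExt.fst_mul, TrivSqZeroExt.snd_mul, map_add, map_mul,
          map_sub, smul_eq_mul] <;> ring
    · intro x
      apply wext <;> apply TrivSqZeroExt.ext <;>
        simp [Phi, od, dW, dI, deriv_evs, deriv_evt, map_sub]
    · intro x
      refine ⟨?_, ?_, ?_, ?_⟩ <;> simp [Phi, ev, eval_evs', eval_evt']
  refine ⟨part1, part2, part3, part4, part5, part6, ?_, ?_, ?_, ?_⟩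
  · -- surjectivity
    rintro w ⟨h1, h2, h3, h4⟩
    simp only [ev] at h1 h2 h3 h4
    refine ⟨((1 - X 0) * Polynomial.aeval (X 1 : RR) (TrivSqZeroExt.fst w.1)
        + X 0 * Polynomial.aeval (X 1 : RR) (TrivSqZeroExt.fst w.2.2.1)
        + (1 - X 1) * Polynomial.aeval (X 0 : RR) (TrivSqZeroExt.fst w.2.2.2)
        + X 1 * Polynomial.aeval (X 0 : RR) (TrivSqZeroExt.fst w.2.1)
        - ((1 - X 0) * (1 - X 1) * MvPolynomial.C ((TrivSqZeroExt.fst w.1).eval 0)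
         + (1 - X 0) * X 1 * MvPolynomial.C ((TrivSqZeroExt.fst w.1).eval 1)
         + X 0 * (1 - X 1) * MvPolynomial.C ((TrivSqZeroExt.fst w.2.2.1).eval 0)
         + X 0 * X 1 * MvPolynomial.C ((TrivSqZeroExt.fst w.2.2.1).eval 1)),
        (1 - X 1) * Polynomial.aeval (X 0 : RR) (TrivSqZeroExt.snd w.2.2.2)
        + X 1 * Polynomial.aeval (X 0 : RR) (TrivSqZeroExt.snd w.2.1),
        (1 - X 0) * Polynomial.aeval (X 1 : RR) (TrivSqZeroExt.snd w.1)
        + X 0 * Polynomial.aeval (X 1 : RR) (TrivSqZeroExt.snd w.2.2.1),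
        0), ?_⟩
    apply wext <;> apply TrivSqZeroExt.ext <;>
      simp only [Phi, tfst, tsnd, map_add, map_sub, map_mul, map_one, evs_lT, evs_lS,
        evt_lS, evt_lT, evs_X0, evs_X1, evt_X0, evt_X1, Polynomial.C_0, Polynomial.C_1,
        map_zero, evs_C, evt_C]
    · linear_combination (1 - Polynomial.X) * congrArg Polynomial.C h4
        - Polynomial.X * congrArg Polynomial.C h1
    · ring
    · ring
    · ring
    · rw [h2, ← h3]; ring
    · ring
    · ring
    · ring
  · -- decomposition into degrees 0 and 1
    rintro w ⟨h1, h2, h3, h4⟩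
    simp only [ev] at h1 h2 h3 h4
    refine ⟨((TrivSqZeroExt.fst w.1, 0), (TrivSqZeroExt.fst w.2.1, 0),
             (TrivSqZeroExt.fst w.2.2.1, 0), (TrivSqZeroExt.fst w.2.2.2, 0)),
            ((0, TrivSqZeroExt.snd w.1), (0, TrivSqZeroExt.snd w.2.1),
             (0, TrivSqZeroExt.snd w.2.2.1), (0, TrivSqZeroExt.snd w.2.2.2)),
            ⟨?_, ?_, ?_, ?_⟩, ⟨?_, ?_, ?_, ?_⟩, ⟨rfl, rfl, rfl, rfl⟩,
            ⟨rfl, rfl, rfl, rfl⟩, ?_⟩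
    · exact h1
    · exact h2
    · exact h3
    · exact h4
    · simp [ev]
    · simp [ev]
    · simp [ev]
    · simp [ev]
    · apply wext <;> apply TrivSqZeroExt.ext <;>
        simp [TrivSqZeroExt.fst_add, TrivSqZeroExt.snd_add]
  · -- H⁰ = ℚ
    rintro w ⟨h1, h2, h3, h4⟩ ⟨e1, e2, e3, e4⟩ hd
    simp only [ev] at h1 h2 h3 h4
    have d1 : derivative (TrivSqZeroExt.fst w.1) = 0 :=
      congrArg (fun v : WW => TrivSqZeroExt.snd v.1) hd
    have d2 : derivative (TrivSqZeroExt.fst w.2.1) = 0 :=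
      congrArg (fun v : WW => TrivSqZeroExt.snd v.2.1) hd
    have d3 : derivative (TrivSqZeroExt.fst w.2.2.1) = 0 :=
      congrArg (fun v : WW => TrivSqZeroExt.snd v.2.2.1) hd
    have d4 : derivative (TrivSqZeroExt.fst w.2.2.2) = 0 :=
      congrArg (fun v : WW => TrivSqZeroExt.snd v.2.2.2) hd
    refine ⟨(TrivSqZeroExt.fst w.1).eval 0, ?_⟩
    have c1 := const_of_deriv_zero d1
    have c2 := const_of_deriv_zero d2
    have c3 := const_of_deriv_zero d3
    have c4 := const_of_deriv_zero d4
    have q1 := eval_one_eq_of_deriv_zero d1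
    have q2 := eval_one_eq_of_deriv_zero d2
    have q3 := eval_one_eq_of_deriv_zero d3
    have q4 := eval_one_eq_of_deriv_zero d4
    apply wext <;> apply TrivSqZeroExt.ext <;>
      simp [e1, e2, e3, e4, TrivSqZeroExt.fst_smul, TrivSqZeroExt.snd_smul,
        TrivSqZeroExt.fst_one, TrivSqZeroExt.snd_one, Polynomial.smul_eq_C_mul]
    · conv_lhs => rw [c1]
    · conv_lhs => rw [c2]
      rw [show (TrivSqZeroExt.fst w.2.1).eval 0 = (TrivSqZeroExt.fst w.1).eval 0 by
        rw [← h1, q1]]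
    · conv_lhs => rw [c3]
      rw [show (TrivSqZeroExt.fst w.2.2.1).eval 0 = (TrivSqZeroExt.fst w.1).eval 0 by
        rw [← q3, ← h2, q2, ← h1, q1]]
    · conv_lhs => rw [c4]
      rw [show (TrivSqZeroExt.fst w.2.2.2).eval 0 = (TrivSqZeroExt.fst w.1).eval 0 by
        rw [h4]]
  · -- H¹ = ℚ
    refine ⟨(((0 : Polynomial ℚ), (1 : Polynomial ℚ)), 0, 0, 0), ?_, ?_, ?_, ?_⟩
    · refine ⟨?_, ?_, ?_, ?_⟩ <;> simp [ev]
    · exact ⟨rfl, by simp [TrivSqZeroExt.fst_zero], by simp [TrivSqZeroExt.fst_zero],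
        by simp [TrivSqZeroExt.fst_zero]⟩
    · rintro η - ⟨e1, e2, e3, e4⟩
      set a2 := TrivSqZeroExt.snd η.1 with ha2
      set b2 := TrivSqZeroExt.snd η.2.1 with hb2
      set c2 := TrivSqZeroExt.snd η.2.2.1 with hc2
      set d2 := TrivSqZeroExt.snd η.2.2.2 with hd2
      set q : ℚ := (antider a2).eval 1 + (antider b2).eval 1 - (antider c2).eval 1
        - (antider d2).eval 1 with hq
      set A : Polynomial ℚ := antider a2 - Polynomial.C q * Polynomial.X with hA
      set B : Polynomial ℚ := antider b2 + Polynomial.C (A.eval 1) with hB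
      set Cc : Polynomial ℚ := antider c2 + Polynomial.C (B.eval 1 - (antider c2).eval 1)
        with hCc
      set D : Polynomial ℚ := antider d2 + Polynomial.C (Cc.eval 0 - (antider d2).eval 1)
        with hD
      refine ⟨q, ((A, 0), (B, 0), (Cc, 0), (D, 0)), ⟨?_, ?_, ?_, ?_⟩,
        ⟨rfl, rfl, rfl, rfl⟩, ?_⟩
      · simp [ev, hB, eval_zero_antider]
      · simp [ev, hCc]
      · simp [ev, hD]
      · simp [ev, hD, hCc, hB, hA, hq, eval_zero_antider]; ring
      · apply wext <;> apply TrivSqZeroExt.ext <;>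
          simp [dW, dI, TrivSqZeroExt.fst_add, TrivSqZeroExt.snd_add,
            TrivSqZeroExt.fst_smul, TrivSqZeroExt.snd_smul, Polynomial.smul_eq_C_mul,
            derivative_antider, hA, hB, hCc, hD, e1, e2, e3, e4, ha2, hb2, hc2, hd2]
    · rintro q z ⟨h1, h2, h3, h4⟩ ⟨e1, e2, e3, e4⟩ heq
      simp only [ev] at h1 h2 h3 h4
      have dA : derivative (TrivSqZeroExt.fst z.1) = Polynomial.C q := by
        have := congrArg (fun v : WW => TrivSqZeroExt.snd v.1) heq
        simpa [dW, dI, TrivSqZeroExt.snd_smul, Polynomial.smul_eq_C_mul] using this.symm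
      have dB : derivative (TrivSqZeroExt.fst z.2.1) = 0 := by
        have := congrArg (fun v : WW => TrivSqZeroExt.snd v.2.1) heq
        simpa [dW, dI, TrivSqZeroExt.snd_smul] using this.symm
      have dC : derivative (TrivSqZeroExt.fst z.2.2.1) = 0 := by
        have := congrArg (fun v : WW => TrivSqZeroExt.snd v.2.2.1) heq
        simpa [dW, dI, TrivSqZeroExt.snd_smul] using this.symm
      have dD : derivative (TrivSqZeroExt.fst z.2.2.2) = 0 := by
        have := congrArg (fun v : WW => TrivSqZeroExt.snd v.2.2.2) heq
        simpa [dW, dI, TrivSqZeroExt.snd_smul] using this.symm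
      have qB := eval_one_eq_of_deriv_zero dB
      have qC := eval_one_eq_of_deriv_zero dC
      have qD := eval_one_eq_of_deriv_zero dD
      have key : (TrivSqZeroExt.fst z.1).eval 1 - (TrivSqZeroExt.fst z.1).eval 0 = q := by
        rw [eval_sub_eq_antider, dA, eval_one_antider_C]
      have : (TrivSqZeroExt.fst z.1).eval 1 = (TrivSqZeroExt.fst z.1).eval 0 := by
        rw [h1, ← qB, h2, qC, h3, qD, h4]
      linarith

end
end
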